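/- arXiv:1801.05762 — 5 statements merged into one kernel-verified Lean document; each statement's English description precedes it below -/
import Mathlib

section
/- Suppose z₀ ∈ U = U₀ × U₁ × U₂ satisfies δ₀(z₀) ≠ 0. Then there exist two bounded open neighborhoods U'' ⊆ U' of z₀ in U and a constant c ∈ (0,1] with the following properties: (i) the map φ₁ is injective when restricted to π₁(U') ⊆ ℝ^{2+m₁}; and for all real numbers N ≥ c⁻¹: (ii) the map ψ_N restricted to U' is injective and is an open map into ℝ^m; (iii) vol(ψ_N(U'')) ≥ c·N^{2+m₁}; (iv) B_c(ψ_N(U'')) ⊆ ψ_N(U'). -/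
open MeasureTheory
open scoped ENNReal

/-- The `m × m` matrix (`m = 2 + m₁ + m₂`) whose columns are
`∂φ₁/∂w₁, ∂φ₁/∂w₂, ∂φ₁/∂x₁, …, ∂φ₁/∂x_{m₁}, −∂φ₂/∂y₁, …, −∂φ₂/∂y_{m₂}`
evaluated at `z = (w, x, y)`; its determinant is `δ₀(z)`. -/
noncomputable def jacobianMatrix (m₁ m₂ : ℕ)
    (φ₁ : (Fin 2 → ℝ) × (Fin m₁ → ℝ) → (Fin (2 + m₁ + m₂) → ℝ))
    (φ₂ : (Fin 2 → ℝ) × (Fin m₂ → ℝ) → (Fin (2 + m₁ + m₂) → ℝ))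
    (z : (Fin 2 → ℝ) × (Fin m₁ → ℝ) × (Fin m₂ → ℝ)) :
    Matrix (Fin (2 + m₁ + m₂)) (Fin (2 + m₁ + m₂)) ℝ :=
  Matrix.of fun i j =>
    Sum.elim
      (Sum.elim
        (fun a : Fin 2 => fderiv ℝ φ₁ (z.1, z.2.1) (Pi.single a 1, 0) i)
        (fun b : Fin m₁ => fderiv ℝ φ₁ (z.1, z.2.1) (0, Pi.single b 1) i))
      (fun c : Fin m₂ => - fderiv ℝ φ₂ (z.1, z.2.2) (0, Pi.single c 1) i)
      (((Equiv.sumCongr finSumFinEquiv (Equiv.refl (Fin m₂))).trans finSumFinEquiv).symm j)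

section Aux

/-- The reindexing equivalence used in `jacobianMatrix`. -/
def auxσ (m₁ m₂ : ℕ) : (Fin 2 ⊕ Fin m₁) ⊕ Fin m₂ ≃ Fin (2 + m₁ + m₂) :=
  (Equiv.sumCongr finSumFinEquiv (Equiv.refl (Fin m₂))).trans finSumFinEquiv

/-- The canonical linear equivalence between the product space and `Fin (2+m₁+m₂) → ℝ`. -/
noncomputable def auxE (m₁ m₂ : ℕ) :
    ((Fin 2 → ℝ) × (Fin m₁ → ℝ) × (Fin m₂ → ℝ)) ≃ₗ[ℝ] (Fin (2 + m₁ + m₂) → ℝ) where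
  toFun z := fun j => Sum.elim (Sum.elim z.1 z.2.1) z.2.2 ((auxσ m₁ m₂).symm j)
  invFun g := (fun a => g (auxσ m₁ m₂ (.inl (.inl a))),
               fun b => g (auxσ m₁ m₂ (.inl (.inr b))),
               fun c => g (auxσ m₁ m₂ (.inr c)))
  map_add' z w := by
    funext j
    rcases h : (auxσ m₁ m₂).symm j with (a | b) | c <;> simp [h]
  map_smul' t z := by
    funext j
    rcases h : (auxσ m₁ m₂).symm j with (a | b) | c <;> simp [h]
  left_inv z := by
    refine Prod.ext ?_ (Prod.ext ?_ ?_) <;> funext a <;> simp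
  right_inv g := by
    funext j
    obtain ⟨p, rfl⟩ : ∃ p, auxσ m₁ m₂ p = j := ⟨(auxσ m₁ m₂).symm j, (auxσ m₁ m₂).apply_symm_apply j⟩
    rcases p with (a | b) | c <;> simp [Equiv.symm_apply_apply]

lemma auxE_apply (m₁ m₂ : ℕ) (u : (Fin 2 → ℝ) × (Fin m₁ → ℝ) × (Fin m₂ → ℝ))
    (j : Fin (2 + m₁ + m₂)) :
    auxE m₁ m₂ u j = Sum.elim (Sum.elim u.1 u.2.1) u.2.2 ((auxσ m₁ m₂).symm j) := rfl

lemma auxE_symm_apply (m₁ m₂ : ℕ) (g : Fin (2 + m₁ + m₂) → ℝ) :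
    (auxE m₁ m₂).symm g = (fun a => g (auxσ m₁ m₂ (.inl (.inl a))),
               fun b => g (auxσ m₁ m₂ (.inl (.inr b))),
               fun c => g (auxσ m₁ m₂ (.inr c))) := rfl

lemma clm_prod_decomp {k l n : ℕ} (T : ((Fin k → ℝ) × (Fin l → ℝ)) →L[ℝ] (Fin n → ℝ))
    (x : Fin k → ℝ) (y : Fin l → ℝ) :
    T (x, y) = (∑ a, x a • T (Pi.single a 1, 0)) + ∑ b, y b • T (0, Pi.single b 1) := by
  have hx : ((x, y) : (Fin k → ℝ) × (Fin l → ℝ))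
      = (∑ a, x a • ((Pi.single a 1 : Fin k → ℝ), (0 : Fin l → ℝ)))
        + ∑ b, y b • ((0 : Fin k → ℝ), (Pi.single b 1 : Fin l → ℝ)) := by
    refine Prod.ext ?_ ?_
    · simp only [Prod.fst_sum, Prod.fst_add, Prod.smul_mk, smul_zero]
      conv_lhs => rw [pi_eq_sum_univ x]
      simp only [Finset.sum_const, smul_zero, add_zero]
      refine Finset.sum_congr rfl fun i _ => ?_
      congr 1
      funext j
      simp [Pi.single_apply, eq_comm]
    · simp only [Prod.snd_sum, Prod.snd_add, Prod.smul_mk, smul_zero]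
      conv_lhs => rw [pi_eq_sum_univ y]
      simp only [Finset.sum_const, smul_zero, zero_add]
      refine Finset.sum_congr rfl fun i _ => ?_
      congr 1
      funext j
      simp [Pi.single_apply, eq_comm]
  rw [hx, map_add, map_sum, map_sum]
  simp_rw [_root_.map_smul]

end Aux

lemma jacobianMatrix_toLin (m₁ m₂ : ℕ)
    (φ₁ : (Fin 2 → ℝ) × (Fin m₁ → ℝ) → (Fin (2 + m₁ + m₂) → ℝ))
    (φ₂ : (Fin 2 → ℝ) × (Fin m₂ → ℝ) → (Fin (2 + m₁ + m₂) → ℝ))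
    (z u : (Fin 2 → ℝ) × (Fin m₁ → ℝ) × (Fin m₂ → ℝ)) :
    Matrix.toLin' (jacobianMatrix m₁ m₂ φ₁ φ₂ z) (auxE m₁ m₂ u)
      = fderiv ℝ φ₁ (z.1, z.2.1) (u.1, u.2.1) - fderiv ℝ φ₂ (z.1, z.2.2) (0, u.2.2) := by
  funext i
  rw [Matrix.toLin'_apply]
  have h0 : (jacobianMatrix m₁ m₂ φ₁ φ₂ z).mulVec (auxE m₁ m₂ u) i
      = ∑ j, jacobianMatrix m₁ m₂ φ₁ φ₂ z i j * auxE m₁ m₂ u j := rfl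
  rw [h0, ← Equiv.sum_comp (auxσ m₁ m₂)
    (fun j => jacobianMatrix m₁ m₂ φ₁ φ₂ z i j * auxE m₁ m₂ u j), Fintype.sum_sum_type,
    Fintype.sum_sum_type]
  have he : ∀ p : (Fin 2 ⊕ Fin m₁) ⊕ Fin m₂,
      jacobianMatrix m₁ m₂ φ₁ φ₂ z i (auxσ m₁ m₂ p)
        = Sum.elim (Sum.elim
            (fun a : Fin 2 => fderiv ℝ φ₁ (z.1, z.2.1) (Pi.single a 1, 0) i)
            (fun b : Fin m₁ => fderiv ℝ φ₁ (z.1, z.2.1) (0, Pi.single b 1) i))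
          (fun c : Fin m₂ => - fderiv ℝ φ₂ (z.1, z.2.2) (0, Pi.single c 1) i) p := by
    intro p
    show Sum.elim _ _ ((auxσ m₁ m₂).symm (auxσ m₁ m₂ p)) = _
    rw [Equiv.symm_apply_apply]
  have he2 : ∀ p, auxE m₁ m₂ u (auxσ m₁ m₂ p)
      = Sum.elim (Sum.elim u.1 u.2.1) u.2.2 p := by
    intro p
    rw [auxE_apply, Equiv.symm_apply_apply]
  simp only [he, he2, Sum.elim_inl, Sum.elim_inr]
  rw [clm_prod_decomp (fderiv ℝ φ₁ (z.1, z.2.1)) u.1 u.2.1,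
    clm_prod_decomp (fderiv ℝ φ₂ (z.1, z.2.2)) 0 u.2.2]
  simp [Finset.sum_apply, mul_comm, neg_mul, Finset.sum_neg_distrib, sub_eq_add_neg]

set_option maxHeartbeats 2000000 in
/-- Suppose `z₀ ∈ U = U₀ × U₁ × U₂` satisfies `δ₀(z₀) ≠ 0`.  Then there
exist bounded open neighborhoods `U'' ⊆ U'` of `z₀` in `U` and a constant `c ∈ (0, 1]`
such that: (i) `φ₁` is injective on `π₁(U')`; and for all real `N ≥ c⁻¹`:
(ii) `ψ_N` restricted to `U'` is injective and open; (iii) `vol (ψ_N(U'')) ≥ c·N^{2+m₁}`;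
(iv) `B_c(ψ_N(U'')) ⊆ ψ_N(U')`. -/
theorem volume_and_injectivity_of_psi
    (m₁ m₂ : ℕ)
    (U₀ : Set (Fin 2 → ℝ)) (U₁ : Set (Fin m₁ → ℝ)) (U₂ : Set (Fin m₂ → ℝ))
    (hU₀o : IsOpen U₀) (hU₁o : IsOpen U₁) (hU₂o : IsOpen U₂)
    (hU₀n : U₀.Nonempty) (hU₁n : U₁.Nonempty) (hU₂n : U₂.Nonempty)
    (φ₁ : (Fin 2 → ℝ) × (Fin m₁ → ℝ) → (Fin (2 + m₁ + m₂) → ℝ))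
    (φ₂ : (Fin 2 → ℝ) × (Fin m₂ → ℝ) → (Fin (2 + m₁ + m₂) → ℝ))
    (hφ₁ : ContDiffOn ℝ 1 φ₁ (U₀ ×ˢ U₁))
    (hφ₂ : ContDiffOn ℝ 1 φ₂ (U₀ ×ˢ U₂))
    (hφ₁C1 : ∃ B : ℝ, ∀ z ∈ U₀ ×ˢ U₁, ‖φ₁ z‖ ≤ B ∧ ‖fderiv ℝ φ₁ z‖ ≤ B)
    (hφ₂C1 : ∃ B : ℝ, ∀ z ∈ U₀ ×ˢ U₂, ‖φ₂ z‖ ≤ B ∧ ‖fderiv ℝ φ₂ z‖ ≤ B)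
    (ψ : ℝ → (Fin 2 → ℝ) × (Fin m₁ → ℝ) × (Fin m₂ → ℝ) → (Fin (2 + m₁ + m₂) → ℝ))
    (hψ : ∀ N z, ψ N z = N • φ₁ (z.1, z.2.1) - φ₂ (z.1, z.2.2))
    (z₀ : (Fin 2 → ℝ) × (Fin m₁ → ℝ) × (Fin m₂ → ℝ))
    (hz₀ : z₀ ∈ U₀ ×ˢ U₁ ×ˢ U₂)
    (hδ₀ : (jacobianMatrix m₁ m₂ φ₁ φ₂ z₀).det ≠ 0) :
    ∃ (U' U'' : Set ((Fin 2 → ℝ) × (Fin m₁ → ℝ) × (Fin m₂ → ℝ))) (c : ℝ),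
      0 < c ∧ c ≤ 1 ∧
      z₀ ∈ U'' ∧ U'' ⊆ U' ∧ U' ⊆ U₀ ×ˢ U₁ ×ˢ U₂ ∧
      IsOpen U' ∧ IsOpen U'' ∧
      Bornology.IsBounded U' ∧ Bornology.IsBounded U'' ∧
      Set.InjOn φ₁ ((fun z : (Fin 2 → ℝ) × (Fin m₁ → ℝ) × (Fin m₂ → ℝ) =>
        (z.1, z.2.1)) '' U') ∧
      ∀ N : ℝ, c⁻¹ ≤ N →
        Set.InjOn (ψ N) U' ∧
        (∀ V ⊆ U', IsOpen V → IsOpen (ψ N '' V)) ∧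
        ENNReal.ofReal (c * N ^ (2 + m₁)) ≤ volume (ψ N '' U'') ∧
        ∀ z ∈ U'', Metric.ball (ψ N z) c ⊆ ψ N '' U' := by
  classical
  set Us : Set ((Fin 2 → ℝ) × (Fin m₁ → ℝ) × (Fin m₂ → ℝ)) := U₀ ×ˢ U₁ ×ˢ U₂ with hUsdef
  have hUso : IsOpen Us := hU₀o.prod (hU₁o.prod hU₂o)
  -- continuous linear projections
  set P₁ : ((Fin 2 → ℝ) × (Fin m₁ → ℝ) × (Fin m₂ → ℝ)) →L[ℝ] ((Fin 2 → ℝ) × (Fin m₁ → ℝ)) :=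
    (ContinuousLinearMap.fst ℝ _ _).prod
      ((ContinuousLinearMap.fst ℝ _ _).comp (ContinuousLinearMap.snd ℝ _ _)) with hP₁def
  set P₂ : ((Fin 2 → ℝ) × (Fin m₁ → ℝ) × (Fin m₂ → ℝ)) →L[ℝ] ((Fin 2 → ℝ) × (Fin m₂ → ℝ)) :=
    (ContinuousLinearMap.fst ℝ _ _).prod
      ((ContinuousLinearMap.snd ℝ _ _).comp (ContinuousLinearMap.snd ℝ _ _)) with hP₂def
  set Q₁ : ((Fin 2 → ℝ) × (Fin m₁ → ℝ) × (Fin m₂ → ℝ)) →L[ℝ] ((Fin 2 → ℝ) × (Fin m₂ → ℝ)) :=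
    (ContinuousLinearMap.fst ℝ _ _).prod 0 with hQ₁def
  set Q₂ : ((Fin 2 → ℝ) × (Fin m₁ → ℝ) × (Fin m₂ → ℝ)) →L[ℝ] ((Fin 2 → ℝ) × (Fin m₂ → ℝ)) :=
    ContinuousLinearMap.prod 0
      ((ContinuousLinearMap.snd ℝ _ _).comp (ContinuousLinearMap.snd ℝ _ _)) with hQ₂def
  set Lc : ℝ → ((Fin 2 → ℝ) × (Fin m₁ → ℝ) × (Fin m₂ → ℝ)) →
      (((Fin 2 → ℝ) × (Fin m₁ → ℝ) × (Fin m₂ → ℝ)) →L[ℝ] (Fin (2 + m₁ + m₂) → ℝ)) := fun t z =>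
    ((fderiv ℝ φ₁ (z.1, z.2.1)).comp P₁) - t • ((fderiv ℝ φ₂ (z.1, z.2.2)).comp Q₁)
      - ((fderiv ℝ φ₂ (z.1, z.2.2)).comp Q₂) with hLcdef
  set Dψ : ℝ → ((Fin 2 → ℝ) × (Fin m₁ → ℝ) × (Fin m₂ → ℝ)) →
      (((Fin 2 → ℝ) × (Fin m₁ → ℝ) × (Fin m₂ → ℝ)) →L[ℝ] (Fin (2 + m₁ + m₂) → ℝ)) := fun N z =>
    N • ((fderiv ℝ φ₁ (z.1, z.2.1)).comp P₁) - ((fderiv ℝ φ₂ (z.1, z.2.2)).comp P₂) with hDψdef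
  -- basic norm lemma for triples
  have hnorm3 : ∀ (a : Fin 2 → ℝ) (b : Fin m₁ → ℝ) (cc : Fin m₂ → ℝ),
      ‖((a, b, cc) : (Fin 2 → ℝ) × (Fin m₁ → ℝ) × (Fin m₂ → ℝ))‖ = max ‖a‖ (max ‖b‖ ‖cc‖) := by
    intro a b cc
    rw [Prod.norm_def, Prod.norm_def]
  -- differentiability of the pieces
  have hd1 : ∀ p ∈ U₀ ×ˢ U₁, HasFDerivAt φ₁ (fderiv ℝ φ₁ p) p := fun p hp =>
    ((hφ₁.contDiffAt ((hU₀o.prod hU₁o).mem_nhds hp)).differentiableAt one_ne_zero).hasFDerivAt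
  have hd2 : ∀ p ∈ U₀ ×ˢ U₂, HasFDerivAt φ₂ (fderiv ℝ φ₂ p) p := fun p hp =>
    ((hφ₂.contDiffAt ((hU₀o.prod hU₂o).mem_nhds hp)).differentiableAt one_ne_zero).hasFDerivAt
  have hψdiff : ∀ N z, z ∈ Us → HasFDerivAt (ψ N) (Dψ N z) z := by
    intro N z hz
    have hψe : ψ N = fun z' : (Fin 2 → ℝ) × (Fin m₁ → ℝ) × (Fin m₂ → ℝ) =>
        N • φ₁ (z'.1, z'.2.1) - φ₂ (z'.1, z'.2.2) := funext (hψ N)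
    rw [hψe]
    have h1 : HasFDerivAt (fun z' : (Fin 2 → ℝ) × (Fin m₁ → ℝ) × (Fin m₂ → ℝ) =>
        φ₁ (z'.1, z'.2.1)) ((fderiv ℝ φ₁ (z.1, z.2.1)).comp P₁) z :=
      HasFDerivAt.comp z (hd1 _ ⟨hz.1, hz.2.1⟩) P₁.hasFDerivAt
    have h2 : HasFDerivAt (fun z' : (Fin 2 → ℝ) × (Fin m₁ → ℝ) × (Fin m₂ → ℝ) =>
        φ₂ (z'.1, z'.2.2)) ((fderiv ℝ φ₂ (z.1, z.2.2)).comp P₂) z :=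
      HasFDerivAt.comp z (hd2 _ ⟨hz.1, hz.2.2⟩) P₂.hasFDerivAt
    exact (h1.const_smul N).sub h2
  have hψC : ∀ N', ContDiffOn ℝ 1 (ψ N') Us := by
    intro N'
    have hψe : ψ N' = fun z' : (Fin 2 → ℝ) × (Fin m₁ → ℝ) × (Fin m₂ → ℝ) =>
        N' • φ₁ (z'.1, z'.2.1) - φ₂ (z'.1, z'.2.2) := funext (hψ N')
    rw [hψe]
    have hc1 : ContDiff ℝ 1 (fun z' : (Fin 2 → ℝ) × (Fin m₁ → ℝ) × (Fin m₂ → ℝ) =>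
        ((z'.1, z'.2.1) : (Fin 2 → ℝ) × (Fin m₁ → ℝ))) :=
      contDiff_fst.prodMk (contDiff_fst.comp contDiff_snd)
    have hc2 : ContDiff ℝ 1 (fun z' : (Fin 2 → ℝ) × (Fin m₁ → ℝ) × (Fin m₂ → ℝ) =>
        ((z'.1, z'.2.2) : (Fin 2 → ℝ) × (Fin m₂ → ℝ))) :=
      contDiff_fst.prodMk (contDiff_snd.comp contDiff_snd)
    exact ((hφ₁.comp hc1.contDiffOn (fun z hz => ⟨hz.1, hz.2.1⟩)).const_smul N').sub
      (hφ₂.comp hc2.contDiffOn (fun z hz => ⟨hz.1, hz.2.2⟩))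
  -- evaluation of Lc
  have hLc0 : ∀ z u, Lc 0 z u = fderiv ℝ φ₁ (z.1, z.2.1) (u.1, u.2.1)
      - fderiv ℝ φ₂ (z.1, z.2.2) (0, u.2.2) := by
    intro z u
    simp [hLcdef, hP₁def, hQ₂def]
  -- the model equivalence at (0, z₀)
  have hMdet : IsUnit (jacobianMatrix m₁ m₂ φ₁ φ₂ z₀).det := isUnit_iff_ne_zero.2 hδ₀
  have hMinv : Invertible (jacobianMatrix m₁ m₂ φ₁ φ₂ z₀) :=
    (jacobianMatrix m₁ m₂ φ₁ φ₂ z₀).invertibleOfIsUnitDet hMdet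
  set E₀L := ((auxE m₁ m₂).trans
    ((jacobianMatrix m₁ m₂ φ₁ φ₂ z₀).toLinearEquiv' hMinv)).toContinuousLinearEquiv with hE₀Ldef
  have hE₀L : ∀ u, E₀L u = Lc 0 z₀ u := by
    intro u
    rw [hLc0, ← jacobianMatrix_toLin]
    rw [hE₀Ldef]
    rw [LinearEquiv.coe_toContinuousLinearEquiv']
    rfl
  set eL := (auxE m₁ m₂).toContinuousLinearEquiv with heLdef
  have heL : ∀ u, eL u = auxE m₁ m₂ u := fun u => by
    rw [heLdef, LinearEquiv.coe_toContinuousLinearEquiv']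
  have heLs : ∀ g, eL.symm g = (auxE m₁ m₂).symm g := fun g => by
    rw [heLdef, LinearEquiv.coe_toContinuousLinearEquiv_symm']
  set esymL := (eL.symm : (Fin (2 + m₁ + m₂) → ℝ) →L[ℝ]
    ((Fin 2 → ℝ) × (Fin m₁ → ℝ) × (Fin m₂ → ℝ))) with hesymLdef
  -- the constant κ, via antilipschitz bound for the model map
  have hinj0 : Function.Injective (Lc 0 z₀) := by
    intro u u' h
    apply E₀L.injective
    rw [hE₀L, hE₀L]
    exact h
  obtain ⟨K0, hK0pos, hK0⟩ := LinearMap.exists_antilipschitzWith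
    (↑(Lc 0 z₀) : ((Fin 2 → ℝ) × (Fin m₁ → ℝ) × (Fin m₂ → ℝ)) →ₗ[ℝ] (Fin (2 + m₁ + m₂) → ℝ))
    (LinearMap.ker_eq_bot.2 hinj0)
  have hK0r : (0 : ℝ) < (K0 : ℝ) := hK0pos
  set κ := (K0 : ℝ)⁻¹ / 4 with hκdef
  have hκpos : 0 < κ := by positivity
  have hanti0 : ∀ u, 4 * κ * ‖u‖ ≤ ‖Lc 0 z₀ u‖ := by
    intro u
    have h1 : ‖u‖ ≤ (K0 : ℝ) * ‖Lc 0 z₀ u‖ := by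
      have h2 := hK0.le_mul_dist u 0
      simpa [dist_eq_norm] using h2
    have h4 : (4 : ℝ) * κ = (K0 : ℝ)⁻¹ := by rw [hκdef]; ring
    rw [h4]
    have h5 := mul_le_mul_of_nonneg_left h1 (inv_nonneg.2 hK0r.le)
    rw [inv_mul_cancel_left₀ hK0r.ne'] at h5
    exact h5
  -- continuity of Lc and the good region
  set d₀ := |(jacobianMatrix m₁ m₂ φ₁ φ₂ z₀).det| with hd₀def
  have hd₀pos : 0 < d₀ := abs_pos.2 hδ₀
  have hLcont : ContinuousOn (fun p : ℝ × ((Fin 2 → ℝ) × (Fin m₁ → ℝ) × (Fin m₂ → ℝ)) =>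
      Lc p.1 p.2) (Set.univ ×ˢ Us) := by
    have hf1 : ContinuousOn (fun p : ℝ × ((Fin 2 → ℝ) × (Fin m₁ → ℝ) × (Fin m₂ → ℝ)) =>
        fderiv ℝ φ₁ (p.2.1, p.2.2.1)) (Set.univ ×ˢ Us) := by
      apply (hφ₁.continuousOn_fderiv_of_isOpen (hU₀o.prod hU₁o) le_rfl).comp
      · exact (continuous_snd.fst.prodMk continuous_snd.snd.fst).continuousOn
      · rintro ⟨t, z⟩ ⟨-, hz⟩
        exact ⟨hz.1, hz.2.1⟩
    have hf2 : ContinuousOn (fun p : ℝ × ((Fin 2 → ℝ) × (Fin m₁ → ℝ) × (Fin m₂ → ℝ)) =>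
        fderiv ℝ φ₂ (p.2.1, p.2.2.2)) (Set.univ ×ˢ Us) := by
      apply (hφ₂.continuousOn_fderiv_of_isOpen (hU₀o.prod hU₂o) le_rfl).comp
      · exact (continuous_snd.fst.prodMk continuous_snd.snd.snd).continuousOn
      · rintro ⟨t, z⟩ ⟨-, hz⟩
        exact ⟨hz.1, hz.2.2⟩
    have hc1 : ContinuousOn (fun p : ℝ × ((Fin 2 → ℝ) × (Fin m₁ → ℝ) × (Fin m₂ → ℝ)) =>
        (fderiv ℝ φ₁ (p.2.1, p.2.2.1)).comp P₁) (Set.univ ×ˢ Us) :=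
      hf1.clm_comp continuousOn_const
    have hcq1 : ContinuousOn (fun p : ℝ × ((Fin 2 → ℝ) × (Fin m₁ → ℝ) × (Fin m₂ → ℝ)) =>
        (fderiv ℝ φ₂ (p.2.1, p.2.2.2)).comp Q₁) (Set.univ ×ˢ Us) :=
      hf2.clm_comp continuousOn_const
    have hcq2 : ContinuousOn (fun p : ℝ × ((Fin 2 → ℝ) × (Fin m₁ → ℝ) × (Fin m₂ → ℝ)) =>
        (fderiv ℝ φ₂ (p.2.1, p.2.2.2)).comp Q₂) (Set.univ ×ˢ Us) :=
      hf2.clm_comp continuousOn_const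
    exact (hc1.sub (continuousOn_fst.smul hcq1)).sub hcq2
  set Ω : Set (((Fin 2 → ℝ) × (Fin m₁ → ℝ) × (Fin m₂ → ℝ)) →L[ℝ] (Fin (2 + m₁ + m₂) → ℝ)) :=
    {A | ‖A - Lc 0 z₀‖ < κ} ∩ {A | d₀ / 2 < |(A.comp esymL).det|} with hΩdef
  have hΩo : IsOpen Ω := by
    apply IsOpen.inter
    · have hco : Continuous fun A : ((Fin 2 → ℝ) × (Fin m₁ → ℝ) × (Fin m₂ → ℝ)) →L[ℝ]
          (Fin (2 + m₁ + m₂) → ℝ) => ‖A - Lc 0 z₀‖ := (continuous_id.sub continuous_const).norm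
      exact isOpen_lt hco continuous_const
    · exact isOpen_lt continuous_const
        ((ContinuousLinearMap.continuous_det.comp
          (Continuous.clm_comp continuous_id continuous_const)).abs)
  have hOopen : IsOpen ((Set.univ ×ˢ Us) ∩
      ((fun p : ℝ × ((Fin 2 → ℝ) × (Fin m₁ → ℝ) × (Fin m₂ → ℝ)) => Lc p.1 p.2) ⁻¹' Ω)) :=
    hLcont.isOpen_inter_preimage (isOpen_univ.prod hUso) hΩo
  have hdet0 : ((Lc 0 z₀).comp esymL).det = (jacobianMatrix m₁ m₂ φ₁ φ₂ z₀).det := by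
    have hcoe : (((Lc 0 z₀).comp esymL : (Fin (2 + m₁ + m₂) → ℝ) →L[ℝ] (Fin (2 + m₁ + m₂) → ℝ)) :
        (Fin (2 + m₁ + m₂) → ℝ) →ₗ[ℝ] (Fin (2 + m₁ + m₂) → ℝ))
        = Matrix.toLin' (jacobianMatrix m₁ m₂ φ₁ φ₂ z₀) := by
      apply LinearMap.ext
      intro g
      show Lc 0 z₀ (eL.symm g) = _
      rw [hLc0, ← jacobianMatrix_toLin]
      congr 1
      rw [heLs]
      exact (auxE m₁ m₂).apply_symm_apply g
    show LinearMap.det _ = _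
    rw [hcoe, LinearMap.det_toLin']
  have hOmem : (((0 : ℝ), z₀) : ℝ × ((Fin 2 → ℝ) × (Fin m₁ → ℝ) × (Fin m₂ → ℝ)))
      ∈ (Set.univ ×ˢ Us) ∩
      ((fun p : ℝ × ((Fin 2 → ℝ) × (Fin m₁ → ℝ) × (Fin m₂ → ℝ)) => Lc p.1 p.2) ⁻¹' Ω) := by
    refine ⟨⟨trivial, hz₀⟩, ⟨?_, ?_⟩⟩
    · show ‖Lc 0 z₀ - Lc 0 z₀‖ < κ
      rw [sub_self, norm_zero]
      exact hκpos
    · show d₀ / 2 < |((Lc 0 z₀).comp esymL).det|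
      rw [hdet0, ← hd₀def]
      linarith
  obtain ⟨ε, hεpos, hεball⟩ := Metric.isOpen_iff.1 hOopen _ hOmem
  set r := ε / 2 with hrdef
  have hrpos : 0 < r := by positivity
  have hreg : ∀ t z, |t| ≤ r → z ∈ Metric.closedBall z₀ r →
      z ∈ Us ∧ ‖Lc t z - Lc 0 z₀‖ < κ ∧ d₀ / 2 < |((Lc t z).comp esymL).det| := by
    intro t z ht hz
    rw [Metric.mem_closedBall] at hz
    have hmem : ((t, z) : ℝ × ((Fin 2 → ℝ) × (Fin m₁ → ℝ) × (Fin m₂ → ℝ)))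
        ∈ Metric.ball (((0 : ℝ), z₀)) ε := by
      rw [Metric.mem_ball, Prod.dist_eq]
      have h1 : dist t 0 = |t| := Real.dist_0_eq_abs t
      apply max_lt <;> [rw [h1]; skip] <;> linarith
    obtain ⟨⟨-, h1⟩, h2, h3⟩ := hεball hmem
    exact ⟨h1, h2, h3⟩
  have hanti : ∀ t z, |t| ≤ r → z ∈ Metric.closedBall z₀ r →
      ∀ u, 3 * κ * ‖u‖ ≤ ‖Lc t z u‖ := by
    intro t z ht hz u
    have h1 := hanti0 u
    have h2 : ‖Lc t z u - Lc 0 z₀ u‖ ≤ κ * ‖u‖ := by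
      have h3 := (Lc t z - Lc 0 z₀).le_opNorm u
      simp only [ContinuousLinearMap.sub_apply] at h3
      exact h3.trans (mul_le_mul_of_nonneg_right (hreg t z ht hz).2.1.le (norm_nonneg u))
    have h4 : ‖Lc 0 z₀ u‖ - ‖Lc t z u‖ ≤ ‖Lc 0 z₀ u - Lc t z u‖ := norm_sub_norm_le _ _
    rw [norm_sub_rev] at h2
    linarith
  -- the neighborhoods and the constant c
  have hrr : r / 2 < r := by linarith
  have hU''sub : Metric.ball z₀ (r / 2) ⊆ Metric.ball z₀ r := Metric.ball_subset_ball hrr.le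
  have habs0 : |(0 : ℝ)| ≤ r := by rw [abs_zero]; exact hrpos.le
  have hU'sub : Metric.ball z₀ r ⊆ Us := fun z hz =>
    (hreg 0 z habs0 (Metric.ball_subset_closedBall hz)).1
  set sE := eL '' Metric.ball z₀ (r / 2) with hsEdef
  have hsEopen : IsOpen sE := eL.toHomeomorph.isOpenMap _ Metric.isOpen_ball
  have hsEne : sE.Nonempty := ⟨eL z₀, z₀, Metric.mem_ball_self (by positivity), rfl⟩
  have hsEbdd : Bornology.IsBounded sE :=
    (eL : ((Fin 2 → ℝ) × (Fin m₁ → ℝ) × (Fin m₂ → ℝ)) →L[ℝ]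
      (Fin (2 + m₁ + m₂) → ℝ)).lipschitz.isBounded_image Metric.isBounded_ball
  have hsEfin : volume sE ≠ ⊤ := hsEbdd.measure_lt_top.ne
  set v := (volume sE).toReal with hvdef
  have hvpos : 0 < v :=
    ENNReal.toReal_pos (hsEopen.measure_pos volume hsEne).ne' hsEfin
  set c := min 1 (min r (min (κ * (r / 2)) (d₀ / 2 * v))) with hcdef
  have hcpos : 0 < c :=
    lt_min one_pos (lt_min hrpos (lt_min (by positivity) (by positivity)))
  have hc1 : c ≤ 1 := min_le_left _ _
  have hcr : c ≤ r := (min_le_right _ _).trans (min_le_left _ _)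
  have hcκ : c ≤ κ * (r / 2) :=
    (min_le_right _ _).trans ((min_le_right _ _).trans (min_le_left _ _))
  have hcd : c ≤ d₀ / 2 * v :=
    (min_le_right _ _).trans ((min_le_right _ _).trans (min_le_right _ _))
  refine ⟨Metric.ball z₀ r, Metric.ball z₀ (r / 2), c, hcpos, hc1,
    Metric.mem_ball_self (by positivity), hU''sub, hU'sub,
    Metric.isOpen_ball, Metric.isOpen_ball,
    Metric.isBounded_ball, Metric.isBounded_ball, ?_, ?_⟩
  · -- (i) injectivity of φ₁ on the projection of U'
    have hι : ∀ p : (Fin 2 → ℝ) × (Fin m₁ → ℝ), p ∈ Metric.ball (z₀.1, z₀.2.1) r →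
        ((p.1, p.2, z₀.2.2) : (Fin 2 → ℝ) × (Fin m₁ → ℝ) × (Fin m₂ → ℝ))
          ∈ Metric.closedBall z₀ r := by
      intro p hp
      rw [Metric.mem_ball] at hp
      rw [Metric.mem_closedBall]
      have h1 : dist ((p.1, p.2, z₀.2.2) :
          (Fin 2 → ℝ) × (Fin m₁ → ℝ) × (Fin m₂ → ℝ)) z₀ = dist p (z₀.1, z₀.2.1) := by
        rw [Prod.dist_eq, Prod.dist_eq, Prod.dist_eq, dist_self]
        simp [max_eq_left dist_nonneg]
      rw [h1]
      exact hp.le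
    have hmemπ : ∀ z ∈ Metric.ball z₀ r,
        ((z.1, z.2.1) : (Fin 2 → ℝ) × (Fin m₁ → ℝ)) ∈ Metric.ball (z₀.1, z₀.2.1) r := by
      intro z hz
      rw [Metric.mem_ball] at hz ⊢
      calc dist ((z.1, z.2.1) : (Fin 2 → ℝ) × (Fin m₁ → ℝ)) (z₀.1, z₀.2.1)
          ≤ dist z z₀ := by
            rw [Prod.dist_eq, Prod.dist_eq, Prod.dist_eq]
            exact max_le_max le_rfl (le_max_left _ _)
        _ < r := hz
    have hzero2 : ((0, 0) : (Fin 2 → ℝ) × (Fin m₂ → ℝ)) = 0 := rfl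
    have hnormp : ∀ w : (Fin 2 → ℝ) × (Fin m₁ → ℝ),
        ‖((w.1, w.2, 0) : (Fin 2 → ℝ) × (Fin m₁ → ℝ) × (Fin m₂ → ℝ))‖ = ‖w‖ := by
      intro w
      rw [hnorm3, Prod.norm_def, norm_zero, max_eq_left (norm_nonneg _)]
    have hLcπ : ∀ z ∈ Metric.closedBall z₀ r, ∀ w : (Fin 2 → ℝ) × (Fin m₁ → ℝ),
        Lc 0 z ((w.1, w.2, 0) : (Fin 2 → ℝ) × (Fin m₁ → ℝ) × (Fin m₂ → ℝ))
          = fderiv ℝ φ₁ (z.1, z.2.1) w := by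
      intro z _ w
      rw [hLc0]
      show fderiv ℝ φ₁ (z.1, z.2.1) (w.1, w.2) - fderiv ℝ φ₂ (z.1, z.2.2) (0, 0) = _
      rw [hzero2, map_zero, sub_zero]
    have hd1bound : ∀ p ∈ Metric.ball (z₀.1, z₀.2.1) r,
        ‖fderiv ℝ φ₁ p - fderiv ℝ φ₁ (z₀.1, z₀.2.1)‖ ≤ κ := by
      intro p hp
      apply ContinuousLinearMap.opNorm_le_bound _ hκpos.le
      intro w
      have hz : ((p.1, p.2, z₀.2.2) : (Fin 2 → ℝ) × (Fin m₁ → ℝ) × (Fin m₂ → ℝ))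
          ∈ Metric.closedBall z₀ r := hι p hp
      have h1 := (hreg 0 _ habs0 hz).2.1
      have h2 : (Lc 0 (p.1, p.2, z₀.2.2) - Lc 0 z₀)
          ((w.1, w.2, 0) : (Fin 2 → ℝ) × (Fin m₁ → ℝ) × (Fin m₂ → ℝ))
          = fderiv ℝ φ₁ p w - fderiv ℝ φ₁ (z₀.1, z₀.2.1) w := by
        rw [ContinuousLinearMap.sub_apply, hLcπ _ hz, hLcπ _ (Metric.mem_closedBall_self hrpos.le)]
      have h3 : ‖(fderiv ℝ φ₁ p - fderiv ℝ φ₁ (z₀.1, z₀.2.1)) w‖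
          = ‖(Lc 0 (p.1, p.2, z₀.2.2) - Lc 0 z₀)
            ((w.1, w.2, 0) : (Fin 2 → ℝ) × (Fin m₁ → ℝ) × (Fin m₂ → ℝ))‖ := by
        rw [h2, ContinuousLinearMap.sub_apply]
      rw [h3]
      calc ‖(Lc 0 (p.1, p.2, z₀.2.2) - Lc 0 z₀)
            ((w.1, w.2, 0) : (Fin 2 → ℝ) × (Fin m₁ → ℝ) × (Fin m₂ → ℝ))‖
          ≤ ‖Lc 0 (p.1, p.2, z₀.2.2) - Lc 0 z₀‖ * ‖((w.1, w.2, 0) :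
            (Fin 2 → ℝ) × (Fin m₁ → ℝ) × (Fin m₂ → ℝ))‖ := ContinuousLinearMap.le_opNorm _ _
        _ ≤ κ * ‖w‖ := by
            rw [hnormp]
            exact mul_le_mul_of_nonneg_right h1.le (norm_nonneg w)
    have hantiφ : ∀ w : (Fin 2 → ℝ) × (Fin m₁ → ℝ),
        4 * κ * ‖w‖ ≤ ‖fderiv ℝ φ₁ (z₀.1, z₀.2.1) w‖ := by
      intro w
      have h1 := hanti0 ((w.1, w.2, 0) : (Fin 2 → ℝ) × (Fin m₁ → ℝ) × (Fin m₂ → ℝ))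
      rw [hLcπ _ (Metric.mem_closedBall_self hrpos.le), hnormp] at h1
      exact h1
    have hMVTφ : ∀ p ∈ Metric.ball (z₀.1, z₀.2.1) r, ∀ q ∈ Metric.ball (z₀.1, z₀.2.1) r,
        ‖(φ₁ p - fderiv ℝ φ₁ (z₀.1, z₀.2.1) p) - (φ₁ q - fderiv ℝ φ₁ (z₀.1, z₀.2.1) q)‖
          ≤ κ * ‖p - q‖ := by
      intro p hp q hq
      refine Convex.norm_image_sub_le_of_norm_hasFDerivWithin_le
        (f := fun p => φ₁ p - fderiv ℝ φ₁ (z₀.1, z₀.2.1) p)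
        (f' := fun p => fderiv ℝ φ₁ p - fderiv ℝ φ₁ (z₀.1, z₀.2.1)) ?_ ?_
        (convex_ball _ _) hq hp
      · intro x hx
        have hxU : x ∈ U₀ ×ˢ U₁ := by
          have h1 := (hreg 0 _ habs0 (hι x hx)).1
          exact ⟨h1.1, h1.2.1⟩
        have hdx : HasFDerivAt φ₁ (fderiv ℝ φ₁ x) x := hd1 x hxU
        exact (hdx.sub ((fderiv ℝ φ₁ (z₀.1, z₀.2.1)).hasFDerivAt)).hasFDerivWithinAt
      · intro x hx
        exact hd1bound x hx
    rintro p ⟨zp, hzp, rfl⟩ q ⟨zq, hzq, rfl⟩ hpq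
    have h1 := hMVTφ _ (hmemπ zp hzp) _ (hmemπ zq hzq)
    have h2 : (φ₁ (zp.1, zp.2.1) - fderiv ℝ φ₁ (z₀.1, z₀.2.1) (zp.1, zp.2.1))
        - (φ₁ (zq.1, zq.2.1) - fderiv ℝ φ₁ (z₀.1, z₀.2.1) (zq.1, zq.2.1))
        = -(fderiv ℝ φ₁ (z₀.1, z₀.2.1) ((zp.1, zp.2.1) - (zq.1, zq.2.1))) := by
      rw [hpq, map_sub]
      abel
    rw [h2, norm_neg] at h1
    have h3 := hantiφ ((zp.1, zp.2.1) - (zq.1, zq.2.1))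
    have h5 : 4 * κ * ‖((zp.1, zp.2.1) - (zq.1, zq.2.1) : (Fin 2 → ℝ) × (Fin m₁ → ℝ))‖
        ≤ κ * ‖((zp.1, zp.2.1) - (zq.1, zq.2.1) : (Fin 2 → ℝ) × (Fin m₁ → ℝ))‖ := h3.trans h1
    have h6 : 3 * κ * ‖((zp.1, zp.2.1) - (zq.1, zq.2.1) : (Fin 2 → ℝ) × (Fin m₁ → ℝ))‖ ≤ 0 := by
      linarith
    have h8 : 0 ≤ 3 * κ * ‖((zp.1, zp.2.1) - (zq.1, zq.2.1) :
        (Fin 2 → ℝ) × (Fin m₁ → ℝ))‖ := by positivity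
    have h9 := le_antisymm h6 h8
    rcases mul_eq_zero.1 h9 with h10 | h10
    · exact absurd h10 (by positivity)
    · exact sub_eq_zero.1 (norm_eq_zero.1 h10)
  · -- the properties for N ≥ c⁻¹
    intro N hN
    have h0 : (1 : ℝ) ≤ c⁻¹ := by
      have h1 := inv_anti₀ hcpos hc1
      simpa using h1
    have hN1 : (1 : ℝ) ≤ N := h0.trans hN
    have hNpos : (0 : ℝ) < N := zero_lt_one.trans_le hN1
    have hN0 : N ≠ 0 := hNpos.ne'
    have hNinvc : N⁻¹ ≤ c := inv_le_of_inv_le₀ hcpos hN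
    have htN : |N⁻¹| ≤ r := by
      rw [abs_of_nonneg (inv_nonneg.2 hNpos.le)]
      exact hNinvc.trans hcr
    -- the scaling equivalence
    set SN := ((LinearEquiv.smulOfNeZero ℝ (Fin 2 → ℝ) N hN0).prodCongr
      ((LinearEquiv.smulOfNeZero ℝ (Fin m₁ → ℝ) N hN0).prodCongr
        (LinearEquiv.refl ℝ (Fin m₂ → ℝ)))).toContinuousLinearEquiv with hSNdef
    have hSN : ∀ u : (Fin 2 → ℝ) × (Fin m₁ → ℝ) × (Fin m₂ → ℝ),
        SN u = (N • u.1, N • u.2.1, u.2.2) := fun u => rfl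
    have hSNsymm : ∀ u : (Fin 2 → ℝ) × (Fin m₁ → ℝ) × (Fin m₂ → ℝ),
        SN.symm (SN u) = u := fun u => SN.symm_apply_apply u
    have hSNs : ∀ u : (Fin 2 → ℝ) × (Fin m₁ → ℝ) × (Fin m₂ → ℝ), ‖u‖ ≤ ‖SN u‖ := by
      intro u
      have h1 : ‖u‖ = max ‖u.1‖ (max ‖u.2.1‖ ‖u.2.2‖) := by
        rw [Prod.norm_def, Prod.norm_def]
      rw [hSN, h1, hnorm3]
      have e1 : ‖N • u.1‖ = N * ‖u.1‖ := by
        rw [norm_smul, Real.norm_eq_abs, abs_of_pos hNpos]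
      have e2 : ‖N • u.2.1‖ = N * ‖u.2.1‖ := by
        rw [norm_smul, Real.norm_eq_abs, abs_of_pos hNpos]
      rw [e1, e2]
      have b1 : ‖u.1‖ ≤ N * ‖u.1‖ := le_mul_of_one_le_left (norm_nonneg _) hN1
      have b2 : ‖u.2.1‖ ≤ N * ‖u.2.1‖ := le_mul_of_one_le_left (norm_nonneg _) hN1
      exact max_le_max b1 (max_le_max b2 le_rfl)
    have hDS : ∀ z u, Dψ N z u = Lc N⁻¹ z (SN u) := by
      intro z u
      rw [hSN]
      have e1 : Lc N⁻¹ z ((N • u.1, N • u.2.1, u.2.2) :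
          (Fin 2 → ℝ) × (Fin m₁ → ℝ) × (Fin m₂ → ℝ))
          = fderiv ℝ φ₁ (z.1, z.2.1) (N • u.1, N • u.2.1)
            - N⁻¹ • fderiv ℝ φ₂ (z.1, z.2.2) (N • u.1, 0)
            - fderiv ℝ φ₂ (z.1, z.2.2) (0, u.2.2) := by
        simp [hLcdef, hP₁def, hQ₁def, hQ₂def]
      have e2 : fderiv ℝ φ₁ (z.1, z.2.1) ((N • u.1, N • u.2.1) : (Fin 2 → ℝ) × (Fin m₁ → ℝ))
          = N • fderiv ℝ φ₁ (z.1, z.2.1) (u.1, u.2.1) := by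
        rw [show ((N • u.1, N • u.2.1) : (Fin 2 → ℝ) × (Fin m₁ → ℝ)) = N • ((u.1, u.2.1) :
          (Fin 2 → ℝ) × (Fin m₁ → ℝ)) from rfl, _root_.map_smul]
      have e3 : N⁻¹ • fderiv ℝ φ₂ (z.1, z.2.2) ((N • u.1, 0) : (Fin 2 → ℝ) × (Fin m₂ → ℝ))
          = fderiv ℝ φ₂ (z.1, z.2.2) (u.1, 0) := by
        rw [show ((N • u.1, (0 : Fin m₂ → ℝ)) : (Fin 2 → ℝ) × (Fin m₂ → ℝ)) = N • ((u.1, 0) :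
          (Fin 2 → ℝ) × (Fin m₂ → ℝ)) from by rw [Prod.smul_mk, smul_zero],
          _root_.map_smul, smul_smul, inv_mul_cancel₀ hN0, one_smul]
      have e4 : fderiv ℝ φ₂ (z.1, z.2.2) ((u.1, 0) : (Fin 2 → ℝ) × (Fin m₂ → ℝ))
          + fderiv ℝ φ₂ (z.1, z.2.2) ((0, u.2.2) : (Fin 2 → ℝ) × (Fin m₂ → ℝ))
          = fderiv ℝ φ₂ (z.1, z.2.2) (u.1, u.2.2) := by
        rw [← map_add]
        congr 1
        rw [Prod.mk_add_mk, add_zero, zero_add]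
      have e5 : Dψ N z u = N • fderiv ℝ φ₁ (z.1, z.2.1) (u.1, u.2.1)
          - fderiv ℝ φ₂ (z.1, z.2.2) (u.1, u.2.2) := by
        simp [hDψdef, hP₁def, hP₂def]
      rw [e1, e2, e3, e5, ← e4]
      abel
    have hLS : ∀ z u, Dψ N z (SN.symm u) = Lc N⁻¹ z u := by
      intro z u
      rw [hDS, SN.apply_symm_apply]
    -- the mean value estimate in rescaled coordinates
    have hMVT : ∀ T : Set ((Fin 2 → ℝ) × (Fin m₁ → ℝ) × (Fin m₂ → ℝ)), Convex ℝ T →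
        (∀ y ∈ T, SN.symm y ∈ Metric.closedBall z₀ r) →
        ∀ y ∈ T, ∀ y' ∈ T,
          ‖(ψ N (SN.symm y) - Lc N⁻¹ z₀ y) - (ψ N (SN.symm y') - Lc N⁻¹ z₀ y')‖
            ≤ 2 * κ * ‖y - y'‖ := by
      intro T hTc hTm y hy y' hy'
      refine Convex.norm_image_sub_le_of_norm_hasFDerivWithin_le
        (f := fun y => ψ N (SN.symm y) - Lc N⁻¹ z₀ y)
        (f' := fun y => (Dψ N (SN.symm y)).comp
          (SN.symm : ((Fin 2 → ℝ) × (Fin m₁ → ℝ) × (Fin m₂ → ℝ)) →L[ℝ]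
            ((Fin 2 → ℝ) × (Fin m₁ → ℝ) × (Fin m₂ → ℝ))) - Lc N⁻¹ z₀) ?_ ?_ hTc hy' hy
      · intro x hx
        have hxU : SN.symm x ∈ Us := (hreg N⁻¹ _ htN (hTm x hx)).1
        have h1 : HasFDerivAt (fun y => ψ N (SN.symm y))
            ((Dψ N (SN.symm x)).comp
              (SN.symm : ((Fin 2 → ℝ) × (Fin m₁ → ℝ) × (Fin m₂ → ℝ)) →L[ℝ]
                ((Fin 2 → ℝ) × (Fin m₁ → ℝ) × (Fin m₂ → ℝ)))) x :=
          HasFDerivAt.comp x (hψdiff N _ hxU) SN.symm.hasFDerivAt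
        exact (h1.sub (Lc N⁻¹ z₀).hasFDerivAt).hasFDerivWithinAt
      · intro x hx
        apply ContinuousLinearMap.opNorm_le_bound _ (by positivity)
        intro u
        have he : ((Dψ N (SN.symm x)).comp
            (SN.symm : ((Fin 2 → ℝ) × (Fin m₁ → ℝ) × (Fin m₂ → ℝ)) →L[ℝ]
              ((Fin 2 → ℝ) × (Fin m₁ → ℝ) × (Fin m₂ → ℝ))) - Lc N⁻¹ z₀) u
            = Lc N⁻¹ (SN.symm x) u - Lc N⁻¹ z₀ u := by
          rw [ContinuousLinearMap.sub_apply, ContinuousLinearMap.comp_apply]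
          rw [show ((SN.symm : ((Fin 2 → ℝ) × (Fin m₁ → ℝ) × (Fin m₂ → ℝ)) →L[ℝ]
            ((Fin 2 → ℝ) × (Fin m₁ → ℝ) × (Fin m₂ → ℝ))) u) = SN.symm u from rfl, hLS]
        rw [he]
        have hb1 : ‖Lc N⁻¹ (SN.symm x) u - Lc 0 z₀ u‖ ≤ κ * ‖u‖ := by
          have h3 := (Lc N⁻¹ (SN.symm x) - Lc 0 z₀).le_opNorm u
          simp only [ContinuousLinearMap.sub_apply] at h3
          exact h3.trans (mul_le_mul_of_nonneg_right
            (hreg N⁻¹ _ htN (hTm x hx)).2.1.le (norm_nonneg u))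
        have hb2 : ‖Lc N⁻¹ z₀ u - Lc 0 z₀ u‖ ≤ κ * ‖u‖ := by
          have h3 := (Lc N⁻¹ z₀ - Lc 0 z₀).le_opNorm u
          simp only [ContinuousLinearMap.sub_apply] at h3
          exact h3.trans (mul_le_mul_of_nonneg_right
            (hreg N⁻¹ z₀ htN (Metric.mem_closedBall_self hrpos.le)).2.1.le (norm_nonneg u))
        have h4 : Lc N⁻¹ (SN.symm x) u - Lc N⁻¹ z₀ u
            = (Lc N⁻¹ (SN.symm x) u - Lc 0 z₀ u) - (Lc N⁻¹ z₀ u - Lc 0 z₀ u) := by abel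
        rw [h4]
        calc ‖(Lc N⁻¹ (SN.symm x) u - Lc 0 z₀ u) - (Lc N⁻¹ z₀ u - Lc 0 z₀ u)‖
            ≤ ‖Lc N⁻¹ (SN.symm x) u - Lc 0 z₀ u‖ + ‖Lc N⁻¹ z₀ u - Lc 0 z₀ u‖ := norm_sub_le _ _
          _ ≤ 2 * κ * ‖u‖ := by linarith
    -- injectivity of ψ N on U'
    have hinjψ : Set.InjOn (ψ N) (Metric.ball z₀ r) := by
      intro z hz z' hz' hzz
      have hTc : Convex ℝ (⇑SN.symm ⁻¹' Metric.ball z₀ r) :=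
        (convex_ball z₀ r).is_linear_preimage
          ⟨fun a b => map_add _ a b, fun t a => _root_.map_smul _ t a⟩
      have hTm : ∀ y ∈ ⇑SN.symm ⁻¹' Metric.ball z₀ r,
          SN.symm y ∈ Metric.closedBall z₀ r := fun y hy =>
        Metric.ball_subset_closedBall hy
      have hy : SN z ∈ ⇑SN.symm ⁻¹' Metric.ball z₀ r := by
        rw [Set.mem_preimage, hSNsymm]
        exact hz
      have hy' : SN z' ∈ ⇑SN.symm ⁻¹' Metric.ball z₀ r := by
        rw [Set.mem_preimage, hSNsymm]
        exact hz'
      have h1 := hMVT _ hTc hTm (SN z) hy (SN z') hy'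
      rw [hSNsymm, hSNsymm, hzz] at h1
      have h2 : (ψ N z' - Lc N⁻¹ z₀ (SN z)) - (ψ N z' - Lc N⁻¹ z₀ (SN z'))
          = -(Lc N⁻¹ z₀ (SN z - SN z')) := by
        rw [map_sub]
        abel
      rw [h2, norm_neg] at h1
      have h3 : SN z - SN z' = SN (z - z') := (map_sub SN z z').symm
      rw [h3] at h1
      have h4 := hanti N⁻¹ z₀ htN (Metric.mem_closedBall_self hrpos.le) (SN (z - z'))
      have h5 : 3 * κ * ‖SN (z - z')‖ ≤ 2 * κ * ‖SN (z - z')‖ := h4.trans h1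
      have h6 : κ * ‖SN (z - z')‖ ≤ 0 := by linarith
      have h7 : 0 ≤ κ * ‖SN (z - z')‖ := by positivity
      have h8 := le_antisymm h6 h7
      rcases mul_eq_zero.1 h8 with h9 | h9
      · exact absurd h9 hκpos.ne'
      · have h10 : ‖z - z'‖ ≤ 0 := by
          have := hSNs (z - z')
          rw [h9] at this
          exact this
        have h11 : ‖z - z'‖ = 0 := le_antisymm h10 (norm_nonneg _)
        exact sub_eq_zero.1 (norm_eq_zero.1 h11)
    -- linear equivalences from Lc on the good region
    have hfinrank : Module.finrank ℝ ((Fin 2 → ℝ) × (Fin m₁ → ℝ) × (Fin m₂ → ℝ))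
        = Module.finrank ℝ (Fin (2 + m₁ + m₂) → ℝ) := (auxE m₁ m₂).finrank_eq
    have hinjLc : ∀ z ∈ Metric.closedBall z₀ r, Function.Injective (Lc N⁻¹ z) := by
      intro z hz u u' huu
      have h1 := hanti N⁻¹ z htN hz (u - u')
      rw [map_sub, huu, sub_self, norm_zero] at h1
      have h3 : 0 ≤ 3 * κ * ‖u - u'‖ := by positivity
      have h4 := le_antisymm h1 h3
      rcases mul_eq_zero.1 h4 with h5 | h5
      · exact absurd h5 (by positivity)
      · exact sub_eq_zero.1 (norm_eq_zero.1 h5)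
    have hmkE : ∀ z ∈ Metric.closedBall z₀ r,
        ∃ W : ((Fin 2 → ℝ) × (Fin m₁ → ℝ) × (Fin m₂ → ℝ)) ≃L[ℝ] (Fin (2 + m₁ + m₂) → ℝ),
          ∀ u, W u = Lc N⁻¹ z u := by
      intro z hz
      refine ⟨(LinearMap.linearEquivOfInjective
        (↑(Lc N⁻¹ z) : ((Fin 2 → ℝ) × (Fin m₁ → ℝ) × (Fin m₂ → ℝ)) →ₗ[ℝ]
          (Fin (2 + m₁ + m₂) → ℝ)) (hinjLc z hz) hfinrank).toContinuousLinearEquiv,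
        fun u => ?_⟩
      rw [LinearEquiv.coe_toContinuousLinearEquiv']
      rw [LinearMap.linearEquivOfInjective_apply]
      rfl
    refine ⟨hinjψ, ?_, ?_, ?_⟩
    · -- openness
      intro V hVU hVo
      rw [isOpen_iff_mem_nhds]
      rintro y ⟨z, hzV, rfl⟩
      have hz' : z ∈ Metric.closedBall z₀ r := Metric.ball_subset_closedBall (hVU hzV)
      have hzU : z ∈ Us := (hreg N⁻¹ z htN hz').1
      obtain ⟨W, hW⟩ := hmkE z hz'
      have hEz : ((SN.trans W) : ((Fin 2 → ℝ) × (Fin m₁ → ℝ) × (Fin m₂ → ℝ)) →L[ℝ]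
          (Fin (2 + m₁ + m₂) → ℝ)) = Dψ N z := by
        apply ContinuousLinearMap.ext
        intro u
        have h1 : ((SN.trans W) : ((Fin 2 → ℝ) × (Fin m₁ → ℝ) × (Fin m₂ → ℝ)) →L[ℝ]
            (Fin (2 + m₁ + m₂) → ℝ)) u = W (SN u) := rfl
        rw [h1, hW, ← hDS]
      have hcdA : ContDiffAt ℝ 1 (ψ N) z := (hψC N).contDiffAt (hUso.mem_nhds hzU)
      have hsd : HasStrictFDerivAt (ψ N) ((SN.trans W) :
          ((Fin 2 → ℝ) × (Fin m₁ → ℝ) × (Fin m₂ → ℝ)) →L[ℝ] (Fin (2 + m₁ + m₂) → ℝ)) z := by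
        rw [hEz]
        exact hcdA.hasStrictFDerivAt' (hψdiff N z hzU) one_ne_zero
      rw [← hsd.map_nhds_eq_of_equiv]
      exact Filter.image_mem_map (hVo.mem_nhds hzV)
    · -- volume lower bound
      have hs : MeasurableSet sE := hsEopen.measurableSet
      have hmem' : ∀ y ∈ sE, eL.symm y ∈ Metric.ball z₀ (r / 2) := by
        rintro y ⟨zz, hzz, rfl⟩
        rw [eL.symm_apply_apply]
        exact hzz
      have hfd : ∀ y ∈ sE, HasFDerivWithinAt (fun y => ψ N (eL.symm y))
          ((Dψ N (eL.symm y)).comp esymL) sE y := by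
        intro y hy
        have hU : eL.symm y ∈ Us := hU'sub (hU''sub (hmem' y hy))
        exact (HasFDerivAt.comp y (hψdiff N _ hU) eL.symm.hasFDerivAt).hasFDerivWithinAt
      have hfi : Set.InjOn (fun y => ψ N (eL.symm y)) sE := by
        intro y hy y' hy' hyy
        have h1 := hinjψ (hU''sub (hmem' y hy)) (hU''sub (hmem' y' hy')) hyy
        exact eL.symm.injective h1
      have key := lintegral_abs_det_fderiv_le_addHaar_image volume hs hfd hfi
      have him : (fun y => ψ N (eL.symm y)) '' sE = ψ N '' Metric.ball z₀ (r / 2) := by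
        rw [hsEdef, Set.image_image]
        exact Set.image_congr fun z _ => by rw [eL.symm_apply_apply]
      have hdetb : ∀ y ∈ sE, ENNReal.ofReal (d₀ / 2 * N ^ (2 + m₁))
          ≤ ENNReal.ofReal |((Dψ N (eL.symm y)).comp esymL).det| := by
        intro y hy
        apply ENNReal.ofReal_le_ofReal
        have hz : eL.symm y ∈ Metric.closedBall z₀ r :=
          Metric.ball_subset_closedBall (hU''sub (hmem' y hy))
        set A := (Lc N⁻¹ (eL.symm y)).comp esymL with hAdef
        set B := ((eL : ((Fin 2 → ℝ) × (Fin m₁ → ℝ) × (Fin m₂ → ℝ)) →L[ℝ]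
            (Fin (2 + m₁ + m₂) → ℝ)).comp
          (((SN : ((Fin 2 → ℝ) × (Fin m₁ → ℝ) × (Fin m₂ → ℝ)) →L[ℝ]
            ((Fin 2 → ℝ) × (Fin m₁ → ℝ) × (Fin m₂ → ℝ)))).comp esymL)) with hBdef
        have hfact : (Dψ N (eL.symm y)).comp esymL = A.comp B := by
          apply ContinuousLinearMap.ext
          intro g
          have h1 : (A.comp B) g = Lc N⁻¹ (eL.symm y) (eL.symm (eL (SN (eL.symm g)))) := rfl
          have h2 : ((Dψ N (eL.symm y)).comp esymL) g = Dψ N (eL.symm y) (eL.symm g) := rfl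
          rw [h1, h2, eL.symm_apply_apply, ← hDS]
        set dvec : Fin (2 + m₁ + m₂) → ℝ :=
          fun j => Sum.elim (fun _ => N) (fun _ => (1 : ℝ)) ((auxσ m₁ m₂).symm j) with hdvec
        have hBlin : (B : (Fin (2 + m₁ + m₂) → ℝ) →ₗ[ℝ] (Fin (2 + m₁ + m₂) → ℝ))
            = Matrix.toLin' (Matrix.diagonal dvec) := by
          apply LinearMap.ext
          intro g
          have hBg : B g = eL (SN (eL.symm g)) := rfl
          show B g = _
          rw [hBg, Matrix.toLin'_apply]
          funext j
          rw [Matrix.mulVec_diagonal, heL, heLs, auxE_symm_apply, hSN, auxE_apply]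
          obtain ⟨p, rfl⟩ : ∃ p, auxσ m₁ m₂ p = j :=
            ⟨(auxσ m₁ m₂).symm j, (auxσ m₁ m₂).apply_symm_apply j⟩
          rcases p with (a | b) | cc <;>
            simp [hdvec, Equiv.symm_apply_apply]
        have hprod : ∏ j, dvec j = N ^ (2 + m₁) := by
          rw [← Equiv.prod_comp (auxσ m₁ m₂) dvec]
          have hv1 : ∀ p, dvec (auxσ m₁ m₂ p)
              = Sum.elim (fun _ : Fin 2 ⊕ Fin m₁ => N) (fun _ : Fin m₂ => (1 : ℝ)) p := by
            intro p
            simp [hdvec, Equiv.symm_apply_apply]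
          rw [Finset.prod_congr rfl fun p _ => hv1 p, Fintype.prod_sum_type]
          simp [Finset.prod_const, Finset.card_univ]
        have hdetB : B.det = N ^ (2 + m₁) := by
          show LinearMap.det
            (B : (Fin (2 + m₁ + m₂) → ℝ) →ₗ[ℝ] (Fin (2 + m₁ + m₂) → ℝ)) = N ^ (2 + m₁)
          rw [hBlin, LinearMap.det_toLin', Matrix.det_diagonal, hprod]
        have hdetA : d₀ / 2 < |A.det| := (hreg N⁻¹ _ htN hz).2.2
        have hdetmul : (A.comp B).det = A.det * B.det := by
          show LinearMap.det _ = LinearMap.det _ * LinearMap.det _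
          exact LinearMap.det_comp _ _
        rw [hfact, hdetmul, hdetB, abs_mul, abs_of_pos (pow_pos hNpos _)]
        exact mul_le_mul_of_nonneg_right hdetA.le (pow_nonneg hNpos.le _)
      calc ENNReal.ofReal (c * N ^ (2 + m₁))
          ≤ ENNReal.ofReal ((d₀ / 2 * N ^ (2 + m₁)) * v) := by
            apply ENNReal.ofReal_le_ofReal
            calc c * N ^ (2 + m₁) ≤ (d₀ / 2 * v) * N ^ (2 + m₁) :=
                mul_le_mul_of_nonneg_right hcd (pow_nonneg hNpos.le _)
              _ = (d₀ / 2 * N ^ (2 + m₁)) * v := by ring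
        _ = ENNReal.ofReal (d₀ / 2 * N ^ (2 + m₁)) * ENNReal.ofReal v :=
            ENNReal.ofReal_mul (by positivity)
        _ = ENNReal.ofReal (d₀ / 2 * N ^ (2 + m₁)) * volume sE := by
            rw [hvdef, ENNReal.ofReal_toReal hsEfin]
        _ = ∫⁻ _ in sE, ENNReal.ofReal (d₀ / 2 * N ^ (2 + m₁)) ∂volume :=
            (setLIntegral_const sE _).symm
        _ ≤ ∫⁻ y in sE, ENNReal.ofReal |((Dψ N (eL.symm y)).comp esymL).det| ∂volume :=
            setLIntegral_mono' hs hdetb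
        _ ≤ volume ((fun y => ψ N (eL.symm y)) '' sE) := key
        _ = volume (ψ N '' Metric.ball z₀ (r / 2)) := by rw [him]
    · -- ball inclusion
      intro z hz y hy
      have hzc : dist z z₀ < r / 2 := Metric.mem_ball.1 hz
      obtain ⟨W, hW⟩ := hmkE z₀ (Metric.mem_closedBall_self hrpos.le)
      have hWs : ‖(W.symm : (Fin (2 + m₁ + m₂) → ℝ) →L[ℝ]
          ((Fin 2 → ℝ) × (Fin m₁ → ℝ) × (Fin m₂ → ℝ)))‖ ≤ (3 * κ)⁻¹ := by
        apply ContinuousLinearMap.opNorm_le_bound _ (by positivity)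
        intro yy
        have h1 := hanti N⁻¹ z₀ htN (Metric.mem_closedBall_self hrpos.le) (W.symm yy)
        rw [← hW, W.apply_symm_apply] at h1
        rw [show (3 * κ)⁻¹ * ‖yy‖ = ‖yy‖ / (3 * κ) from by ring,
          le_div_iff₀ (by positivity), mul_comm]
        exact h1
      have hWpos : 0 < ‖(W.symm : (Fin (2 + m₁ + m₂) → ℝ) →L[ℝ]
          ((Fin 2 → ℝ) × (Fin m₁ → ℝ) × (Fin m₂ → ℝ)))‖ := by
        have hy₀ : ((fun _ => (1 : ℝ)) : Fin (2 + m₁ + m₂) → ℝ) ≠ 0 := by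
          intro hcon
          have h1 := congrFun hcon ⟨0, by omega⟩
          simpa using h1
        have h2 : W.symm (fun _ => (1 : ℝ)) ≠ 0 := by
          intro hcon
          apply hy₀
          rw [← W.apply_symm_apply (fun _ => (1 : ℝ)), hcon, map_zero]
        have h3 : 0 < ‖W.symm (fun _ => (1 : ℝ))‖ := norm_pos_iff.2 h2
        have h4 := ContinuousLinearMap.le_opNorm (W.symm : (Fin (2 + m₁ + m₂) → ℝ) →L[ℝ]
          ((Fin 2 → ℝ) × (Fin m₁ → ℝ) × (Fin m₂ → ℝ))) (fun _ => (1 : ℝ))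
        have h5 : (0 : ℝ) < ‖(W.symm : (Fin (2 + m₁ + m₂) → ℝ) →L[ℝ]
            ((Fin 2 → ℝ) × (Fin m₁ → ℝ) × (Fin m₂ → ℝ)))‖
            * ‖((fun _ => (1 : ℝ)) : Fin (2 + m₁ + m₂) → ℝ)‖ := lt_of_lt_of_le h3 h4
        by_contra h6
        push_neg at h6
        have h7 : ‖(W.symm : (Fin (2 + m₁ + m₂) → ℝ) →L[ℝ]
            ((Fin 2 → ℝ) × (Fin m₁ → ℝ) × (Fin m₂ → ℝ)))‖ = 0 :=
          le_antisymm h6 (norm_nonneg _)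
        rw [h7, zero_mul] at h5
        exact lt_irrefl 0 h5
      have hTm : ∀ y' ∈ Metric.closedBall (SN z) (r / 2),
          SN.symm y' ∈ Metric.closedBall z₀ r := by
        intro y' hy'
        rw [Metric.mem_closedBall] at hy' ⊢
        have h1 : dist (SN.symm y') z ≤ dist y' (SN z) := by
          rw [dist_eq_norm, dist_eq_norm]
          have h2 := hSNs (SN.symm y' - z)
          rw [map_sub, SN.apply_symm_apply] at h2
          exact h2
        calc dist (SN.symm y') z₀ ≤ dist (SN.symm y') z + dist z z₀ := dist_triangle _ _ _
          _ ≤ r / 2 + r / 2 := add_le_add (h1.trans hy') hzc.le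
          _ = r := by ring
      set cnn : NNReal := ⟨2 * κ, by positivity⟩ with hcnn
      have happrox : ApproximatesLinearOn (fun y' => ψ N (SN.symm y'))
          (W : ((Fin 2 → ℝ) × (Fin m₁ → ℝ) × (Fin m₂ → ℝ)) →L[ℝ] (Fin (2 + m₁ + m₂) → ℝ))
          (Metric.closedBall (SN z) (r / 2)) cnn := by
        intro x hx x' hx'
        have h0 := hMVT (Metric.closedBall (SN z) (r / 2)) (convex_closedBall _ _) hTm
          x hx x' hx'
        have heq : ψ N (SN.symm x) - ψ N (SN.symm x')
            - (W : ((Fin 2 → ℝ) × (Fin m₁ → ℝ) × (Fin m₂ → ℝ)) →L[ℝ]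
              (Fin (2 + m₁ + m₂) → ℝ)) (x - x')
            = (ψ N (SN.symm x) - Lc N⁻¹ z₀ x) - (ψ N (SN.symm x') - Lc N⁻¹ z₀ x') := by
          have hWc : (W : ((Fin 2 → ℝ) × (Fin m₁ → ℝ) × (Fin m₂ → ℝ)) →L[ℝ]
              (Fin (2 + m₁ + m₂) → ℝ)) (x - x') = Lc N⁻¹ z₀ x - Lc N⁻¹ z₀ x' := by
            have h1 : (W : ((Fin 2 → ℝ) × (Fin m₁ → ℝ) × (Fin m₂ → ℝ)) →L[ℝ]
              (Fin (2 + m₁ + m₂) → ℝ)) (x - x') = W (x - x') := rfl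
            rw [h1, map_sub, hW, hW]
          rw [hWc]
          abel
        rw [heq]
        exact h0
      have hsurj := happrox.surjOn_closedBall_of_nonlinearRightInverse
        W.toNonlinearRightInverse (by positivity : (0 : ℝ) ≤ r / 2) (Set.Subset.refl _)
      have hfb : ψ N (SN.symm (SN z)) = ψ N z := by rw [hSNsymm]
      have hρ : c ≤ ((W.toNonlinearRightInverse.nnnorm : ℝ)⁻¹ - cnn) * (r / 2) := by
        have hn : (W.toNonlinearRightInverse.nnnorm : ℝ)
            = ‖(W.symm : (Fin (2 + m₁ + m₂) → ℝ) →L[ℝ]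
              ((Fin 2 → ℝ) × (Fin m₁ → ℝ) × (Fin m₂ → ℝ)))‖ := rfl
        have h2 : 3 * κ ≤ (W.toNonlinearRightInverse.nnnorm : ℝ)⁻¹ := by
          rw [hn, ← inv_inv (3 * κ)]
          exact inv_anti₀ hWpos hWs
        have h3 : (cnn : ℝ) = 2 * κ := rfl
        calc c ≤ κ * (r / 2) := hcκ
          _ ≤ ((W.toNonlinearRightInverse.nnnorm : ℝ)⁻¹ - cnn) * (r / 2) := by
              apply mul_le_mul_of_nonneg_right _ (by positivity)
              rw [h3]
              linarith
      have hymem : y ∈ Metric.closedBall ((fun y' => ψ N (SN.symm y')) (SN z))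
          (((W.toNonlinearRightInverse.nnnorm : ℝ)⁻¹ - cnn) * (r / 2)) := by
        rw [Metric.mem_closedBall]
        have h1 : (fun y' => ψ N (SN.symm y')) (SN z) = ψ N z := hfb
        rw [h1]
        exact le_trans (Metric.mem_ball.1 hy).le hρ
      obtain ⟨x, hxT, hxy⟩ := hsurj hymem
      refine ⟨SN.symm x, ?_, hxy⟩
      rw [Metric.mem_ball]
      have h1 : dist (SN.symm x) z ≤ dist x (SN z) := by
        rw [dist_eq_norm, dist_eq_norm]
        have h2 := hSNs (SN.symm x - z)
        rw [map_sub, SN.apply_symm_apply] at h2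
        exact h2
      calc dist (SN.symm x) z₀ ≤ dist (SN.symm x) z + dist z z₀ := dist_triangle _ _ _
        _ ≤ r / 2 + dist z z₀ := add_le_add_left (h1.trans (Metric.mem_closedBall.1 hxT)) _
        _ < r / 2 + r / 2 := by linarith
        _ = r := by ring
end

section
/- Let m ≥ 1 be an integer, c₁ > 0 a real number, S ⊆ ℝ^m a bounded open set, and W ⊆ ℝ^m a set such that for every s ∈ S the open ball B_{c₁}(s) is contained in W. Then for every integer N₀ ≥ 1/c₁, the set W ∩ N₀⁻¹ℤ^m has at least vol(S) elements; that is, its cardinality (possibly infinite) is at least the Lebesgue measure of S. -/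
open MeasureTheory
open scoped ENNReal Pointwise

theorem aux_tsum_le_encard {ι α : Type*} [Countable ι] (f : ι → ℝ≥0∞) (F : ι → α) (X : Set α)
    (hf1 : ∀ i, f i ≤ 1) (hFX : ∀ i, f i ≠ 0 → F i ∈ X)
    (hinj : Function.Injective F) :
    ∑' i, f i ≤ (X.encard : ℝ≥0∞) := by
  set T := {i | f i ≠ 0} with hT
  have hcard : T.encard ≤ X.encard :=
    Set.encard_le_encard_of_injOn (fun i hi => hFX i hi) (Set.injOn_of_injective hinj)
  by_cases hfin : T.Finite
  · have hzero : ∀ i ∉ hfin.toFinset, f i = 0 := by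
      intro i hi
      rw [Set.Finite.mem_toFinset] at hi
      exact not_not.mp hi
    rw [tsum_eq_sum hzero]
    calc ∑ i ∈ hfin.toFinset, f i ≤ ∑ _i ∈ hfin.toFinset, 1 := Finset.sum_le_sum fun i _ => hf1 i
      _ = (hfin.toFinset.card : ℝ≥0∞) := by simp
      _ = (T.encard : ℝ≥0∞) := by rw [hfin.encard_eq_coe_toFinset_card]; simp
      _ ≤ (X.encard : ℝ≥0∞) := by exact_mod_cast hcard
  · have hTe : T.encard = ⊤ := Set.encard_eq_top hfin
    have hXe : X.encard = ⊤ := top_unique (hTe ▸ hcard)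
    rw [hXe]
    simp

/-- (Blichfeldt with a translation of controlled denominator.)
Let `m ≥ 1`, `c₁ > 0`, `S ⊆ ℝ^m` bounded and open, and `W ⊆ ℝ^m` such that for every
`s ∈ S` the open ball (maximum norm) of radius `c₁` around `s` is contained in `W`.
Then for every integer `N₀ ≥ 1/c₁` the set `W ∩ N₀⁻¹ℤ^m` has at least `vol S` elements. -/
theorem card_inter_rational_lattice_ge_volume
    (m : ℕ) (hm : 1 ≤ m) (c₁ : ℝ) (hc₁ : 0 < c₁)
    (S : Set (Fin m → ℝ)) (hSo : IsOpen S) (hSb : Bornology.IsBounded S)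
    (W : Set (Fin m → ℝ)) (hSW : ∀ s ∈ S, Metric.ball s c₁ ⊆ W) :
    ∀ N₀ : ℕ, 1 / c₁ ≤ (N₀ : ℝ) →
      volume S ≤
        ((W ∩ {v : Fin m → ℝ | ∀ i, ∃ a : ℤ, v i = (a : ℝ) / N₀}).encard : ℝ≥0∞) := by
  intro N₀ hN₀
  set n : ℝ := (N₀ : ℝ) with hn_def
  have hn : 0 < n := lt_of_lt_of_le (by positivity) hN₀
  have hninv : n⁻¹ ≤ c₁ := by
    have h := one_div_le_one_div_of_le (by positivity : (0:ℝ) < 1/c₁) hN₀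
    simpa [one_div, inv_inv] using h
  have hN0 : 1 ≤ N₀ := Nat.one_le_iff_ne_zero.mpr (by rintro rfl; simp [hn_def] at hn)
  have hn1 : (1:ℝ) ≤ n := by rw [hn_def]; exact_mod_cast hN0
  have hN1 : ENNReal.ofReal (n⁻¹) ^ m ≤ (1 : ℝ≥0∞) := by
    refine pow_le_one' ?_ m
    rw [← ENNReal.ofReal_one]
    exact ENNReal.ofReal_le_ofReal (inv_le_one_of_one_le₀ hn1)
  -- the scaled basis
  have hnne : (n⁻¹ : ℝ) ≠ 0 := by positivity
  set u : ℝˣ := Units.mk0 (n⁻¹) hnne with hu_def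
  set b : Module.Basis (Fin m) ℝ (Fin m → ℝ) := (Pi.basisFun ℝ (Fin m)).unitsSMul (fun _ => u) with hb_def
  have hrepr : ∀ (x : Fin m → ℝ) (i : Fin m), b.repr x i = n * x i := by
    intro x i
    rw [hb_def, Module.Basis.repr_unitsSMul]
    simp only [hu_def, Units.smul_def, Units.val_inv_eq_inv_val, Units.val_mk0, inv_inv,
      smul_eq_mul, Pi.basisFun_repr]
  set L := Submodule.span ℤ (Set.range b) with hL_def
  set D := ZSpan.fundamentalDomain b with hD_def
  have hmemD : ∀ x : Fin m → ℝ, x ∈ D ↔ ∀ i, n * x i ∈ Set.Ico (0:ℝ) 1 := by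
    intro x
    rw [hD_def, ZSpan.mem_fundamentalDomain]
    simp_rw [hrepr]
  -- volume of the fundamental domain
  have hvolD : volume D ≤ 1 := by
    have hDeq : D = Set.pi Set.univ (fun _ : Fin m => Set.Ico (0:ℝ) n⁻¹) := by
      ext x
      rw [hmemD]
      simp only [Set.mem_pi, Set.mem_univ, forall_true_left, Set.mem_Ico]
      constructor
      · intro h i
        obtain ⟨h1, h2⟩ := h i
        constructor
        · nlinarith
        · have h3 : n * x i < n * n⁻¹ := by
            rw [mul_inv_cancel₀ (ne_of_gt hn)]; exact h2
          exact lt_of_mul_lt_mul_left h3 hn.le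
      · intro h i
        obtain ⟨h1, h2⟩ := h i
        constructor
        · positivity
        · calc n * x i < n * n⁻¹ := by exact (mul_lt_mul_iff_right₀ hn).mpr h2
            _ = 1 := mul_inv_cancel₀ (by positivity)
    rw [hDeq, volume_pi, Measure.pi_pi]
    simp only [Real.volume_Ico, sub_zero, Finset.prod_const, Finset.card_univ, Fintype.card_fin]
    exact hN1
  haveI : Countable L.toAddSubgroup := (inferInstance : Countable L)
  rw [(ZSpan.isAddFundamentalDomain' b volume).measure_eq_tsum S]
  refine aux_tsum_le_encard (ι := L.toAddSubgroup) _ (fun g => -(g : Fin m → ℝ)) _ ?_ ?_ ?_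
  · intro g
    exact le_trans (measure_mono Set.inter_subset_right) hvolD
  · intro g hg
    obtain ⟨x, hx1, hx2⟩ := MeasureTheory.nonempty_of_measure_ne_zero hg
    obtain ⟨s, hs, hgs⟩ := hx1
    have hxD := (hmemD x).mp hx2
    have hxi : ∀ i, 0 ≤ x i ∧ x i < n⁻¹ := by
      intro i
      obtain ⟨h1, h2⟩ := hxD i
      refine ⟨by nlinarith, ?_⟩
      have h3 : n * x i < n * n⁻¹ := by
        rw [mul_inv_cancel₀ (ne_of_gt hn)]; exact h2
      exact lt_of_mul_lt_mul_left h3 hn.le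
    have hxg : ∀ i, x i = (g : Fin m → ℝ) i + s i := by
      intro i; rw [← hgs]; rfl
    constructor
    · refine hSW s hs ?_
      rw [Metric.mem_ball, dist_pi_lt_iff hc₁]
      intro i
      rw [Real.dist_eq]
      have heq : ((fun g : L.toAddSubgroup => -(g : Fin m → ℝ)) g) i - s i = -(x i) := by
        simp only [Pi.neg_apply]
        rw [hxg i]; ring
      rw [heq, abs_neg, abs_of_nonneg (hxi i).1]
      exact lt_of_lt_of_le (hxi i).2 hninv
    · intro i
      have hgL : (g : Fin m → ℝ) ∈ L := g.2
      obtain ⟨z, hz⟩ := (b.mem_span_iff_repr_mem ℤ _).mp hgL i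
      rw [hrepr] at hz
      have hzr : (z : ℝ) = n * (g : Fin m → ℝ) i := by
        simpa using hz
      refine ⟨-z, ?_⟩
      show (-(g : Fin m → ℝ)) i = ((-z : ℤ) : ℝ) / (N₀ : ℝ)
      rw [Pi.neg_apply, ← hn_def]
      push_cast
      rw [hzr]
      field_simp
  · intro g1 g2 h
    exact Subtype.ext (neg_injective h)
end

section
/- Let T be a ℂ-vector space of finite dimension g and let W be a ℂ-vector subspace of T with dim_ℂ W = m. Let V₀ be an ℝ-vector subspace of T_ℝ of real dimension 2m + 2k that contains W. Then there exists a ℂ-vector subspace V of T with dim_ℂ V = g − (m + k) such that V ∩ V₀ = 0. -/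
open Module

theorem smul_decomp (a : ℂ) {M : Type*} [AddCommGroup M] [Module ℂ M] (x : M) :
    a • x = a.re • x + a.im • (Complex.I • x) := by
  rw [← Complex.coe_smul, ← Complex.coe_smul, smul_smul, ← add_smul, Complex.re_add_im]

theorem smul_decompB (a : ℂ) {M : Type*} [AddCommGroup M] [Module ℂ M] (v w : M) :
    a • (v + Complex.I • w)
      = (a.re • v - a.im • w) + Complex.I • (a.im • v + a.re • w) := by
  have h := Complex.re_add_im a
  conv_lhs => rw [← h]
  match_scalars <;> simp [Complex.ext_iff]

theorem finrank_comap_mkQ {T : Type*} [AddCommGroup T] [Module ℂ T] [FiniteDimensional ℂ T]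
    (L : Submodule ℂ T) (V' : Submodule ℂ (T ⧸ L)) :
    finrank ℂ (V'.comap L.mkQ) = finrank ℂ V' + finrank ℂ L := by
  set P := V'.comap L.mkQ with hP
  have hLP : L ≤ P := by
    intro x hx
    have : L.mkQ x = 0 := (Submodule.Quotient.mk_eq_zero L).2 hx
    simp [hP, Submodule.mem_comap, this]
  have hrange : LinearMap.range (L.mkQ.comp P.subtype) = V' := by
    rw [LinearMap.range_comp, Submodule.range_subtype]
    exact Submodule.map_comap_eq_of_surjective (Submodule.mkQ_surjective L) V'
  have hker : LinearMap.ker (L.mkQ.comp P.subtype) = L.comap P.subtype := by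
    rw [LinearMap.ker_comp, Submodule.ker_mkQ]
  have h1 := LinearMap.finrank_range_add_finrank_ker (L.mkQ.comp P.subtype)
  rw [hrange, hker] at h1
  have h2 : finrank ℂ (L.comap P.subtype) = finrank ℂ L :=
    (Submodule.comapSubtypeEquivOfLe hLP).finrank_eq
  omega

theorem exists_compl_in {T : Type*} [AddCommGroup T] [Module ℂ T] [FiniteDimensional ℂ T]
    (L P : Submodule ℂ T) (hLP : L ≤ P) :
    ∃ V : Submodule ℂ T, V ≤ P ∧ V ⊓ L = ⊥ ∧
      finrank ℂ V + finrank ℂ L = finrank ℂ P := by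
  obtain ⟨V'', hc⟩ := Submodule.exists_isCompl (L.comap P.subtype)
  refine ⟨V''.map P.subtype, Submodule.map_subtype_le P V'', ?_, ?_⟩
  · rw [eq_bot_iff]
    rintro x ⟨hx1, hx2⟩
    obtain ⟨y, hy, rfl⟩ := hx1
    have : y ∈ Submodule.comap P.subtype L ⊓ V'' := ⟨hx2, hy⟩
    rw [hc.inf_eq_bot] at this
    simpa using this
  · rw [Submodule.finrank_map_subtype_eq]
    have h1 := Submodule.finrank_add_eq_of_isCompl hc
    have h2 : finrank ℂ (L.comap P.subtype) = finrank ℂ L :=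
      (Submodule.comapSubtypeEquivOfLe hLP).finrank_eq
    omega

theorem finrank_map_mkQ {T : Type*} [AddCommGroup T] [Module ℂ T] [FiniteDimensional ℂ T]
    (L : Submodule ℂ T) (V₀ : Submodule ℝ T) :
    finrank ℝ (V₀.map ((L.mkQ).restrictScalars ℝ))
      + finrank ℝ ((L.restrictScalars ℝ ⊓ V₀).comap V₀.subtype)
      = finrank ℝ V₀ := by
  haveI : Module.Finite ℝ T := Module.Finite.trans ℂ T
  set f := ((L.mkQ).restrictScalars ℝ).comp V₀.subtype with hf
  have hrange : LinearMap.range f = V₀.map ((L.mkQ).restrictScalars ℝ) := by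
    rw [hf, LinearMap.range_comp, Submodule.range_subtype]
  have hker : LinearMap.ker f = (L.restrictScalars ℝ ⊓ V₀).comap V₀.subtype := by
    rw [hf, LinearMap.ker_comp]
    ext x
    simp [Submodule.mem_comap, LinearMap.mem_ker, Submodule.Quotient.mk_eq_zero, x.2]
  have h1 := LinearMap.finrank_range_add_finrank_ker f
  rw [hrange, hker] at h1
  exact h1

theorem key (g : ℕ) : ∀ (T : Type u) [AddCommGroup T] [Module ℂ T] [FiniteDimensional ℂ T]
    (V₀ : Submodule ℝ T), finrank ℂ T ≤ g →
    ∃ V : Submodule ℂ T, finrank ℂ V = finrank ℂ T - (finrank ℝ V₀ + 1) / 2 ∧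
      V.restrictScalars ℝ ⊓ V₀ = ⊥ := by
  induction g with
  | zero =>
    intro T _ _ _ V₀ hg
    have h0 : finrank ℂ T = 0 := Nat.le_zero.1 hg
    exact ⟨⊥, by simp [h0], by rw [Submodule.restrictScalars_bot, bot_inf_eq]⟩
  | succ n ih =>
    intro T _ _ _ V₀ hg
    by_cases hbot : V₀ = ⊥
    · subst hbot
      refine ⟨⊤, ?_, by rw [inf_bot_eq]⟩
      rw [finrank_top, finrank_bot]
      omega
    obtain ⟨v, hvV₀, hv0⟩ := Submodule.exists_mem_ne_zero_of_ne_bot hbot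
    by_cases hA : ∃ u, u ∈ V₀ ∧ u ≠ 0 ∧ Complex.I • u ∈ V₀
    · -- Case A : V₀ contains a complex line L = ℂ u
      obtain ⟨u, huV₀, hu0, hIu⟩ := hA
      set L : Submodule ℂ T := ℂ ∙ u with hL
      have hLV₀ : L.restrictScalars ℝ ≤ V₀ := by
        intro x hx
        rw [Submodule.restrictScalars_mem, hL, Submodule.mem_span_singleton] at hx
        obtain ⟨a, rfl⟩ := hx
        rw [smul_decomp]
        exact V₀.add_mem (V₀.smul_mem _ huV₀) (V₀.smul_mem _ hIu)
      have hLfin : finrank ℂ L = 1 := finrank_span_singleton hu0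
      have hQ : finrank ℂ (T ⧸ L) + 1 = finrank ℂ T := by
        have := Submodule.finrank_quotient_add_finrank L
        omega
      set V₀' := V₀.map ((L.mkQ).restrictScalars ℝ) with hV₀'
      have hd' : finrank ℝ V₀' + 2 = finrank ℝ V₀ := by
        rw [hV₀']
        have h1 := finrank_map_mkQ L V₀
        have hinf : L.restrictScalars ℝ ⊓ V₀ = L.restrictScalars ℝ := inf_eq_left.2 hLV₀
        rw [hinf] at h1
        have h2 : finrank ℝ ((L.restrictScalars ℝ).comap V₀.subtype)
            = finrank ℝ (L.restrictScalars ℝ) :=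
          (Submodule.comapSubtypeEquivOfLe hLV₀).finrank_eq
        have h3 : finrank ℝ (L.restrictScalars ℝ) = finrank ℝ L :=
          ((Submodule.restrictScalarsEquiv ℝ ℂ T L).restrictScalars ℝ).finrank_eq
        have h4 : finrank ℝ L = 2 * finrank ℂ L := finrank_real_of_complex L
        omega
      obtain ⟨V', hV'rank, hV'inf⟩ := ih (T ⧸ L) V₀' (by omega)
      obtain ⟨V, hVP, hVL, hVrank⟩ := exists_compl_in L (V'.comap L.mkQ)
        (by intro x hx
            have : L.mkQ x = 0 := (Submodule.Quotient.mk_eq_zero L).2 hx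
            simp [Submodule.mem_comap, this])
      refine ⟨V, ?_, ?_⟩
      · have h5 := finrank_comap_mkQ L V'
        omega
      · rw [eq_bot_iff]
        intro x hx
        rw [Submodule.mem_inf, Submodule.restrictScalars_mem] at hx
        obtain ⟨hx1, hx2⟩ := hx
        have hxq : L.mkQ x ∈ V' := hVP hx1
        have hxq0 : L.mkQ x ∈ V'.restrictScalars ℝ ⊓ V₀' :=
          ⟨hxq, Submodule.mem_map_of_mem hx2⟩
        rw [hV'inf] at hxq0
        have hxL : x ∈ L := (Submodule.Quotient.mk_eq_zero L).1 hxq0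
        have hmem : x ∈ V ⊓ L := ⟨hx1, hxL⟩
        rw [hVL] at hmem
        exact hmem
    · push_neg at hA
      by_cases hw : ∃ w, w ∈ V₀ ∧ w ∉ (ℝ ∙ v : Submodule ℝ T)
      · -- Case B : V₀ is totally real of dimension ≥ 2
        obtain ⟨w, hwV₀, hwv⟩ := hw
        set z := v + Complex.I • w with hz
        have hzV : ∀ a : ℂ, a • z ∈ V₀ → a = 0 := by
          intro a haz
          rw [hz, smul_decompB] at haz
          set p := a.re • v - a.im • w with hp
          set q := a.im • v + a.re • w with hq
          have hpV : p ∈ V₀ := V₀.sub_mem (V₀.smul_mem _ hvV₀) (V₀.smul_mem _ hwV₀)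
          have hqV : q ∈ V₀ := V₀.add_mem (V₀.smul_mem _ hvV₀) (V₀.smul_mem _ hwV₀)
          have hIq : Complex.I • q ∈ V₀ := by
            have hq' : Complex.I • q = (p + Complex.I • q) - p := by abel
            rw [hq']
            exact V₀.sub_mem haz hpV
          have hq0 : q = 0 := by
            by_contra h
            exact hA q hqV h hIq
          have hre : a.re = 0 := by
            by_contra h
            apply hwv
            rw [Submodule.mem_span_singleton]
            refine ⟨a.re⁻¹ * -a.im, ?_⟩
            have h1 : a.re • w = (-a.im) • v := by
              rw [neg_smul]
              exact eq_neg_of_add_eq_zero_right hq0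
            have h2 := congrArg (fun y => (a.re)⁻¹ • y) h1
            simp only [smul_smul, inv_mul_cancel₀ h, one_smul] at h2
            exact h2.symm
          have him : a.im = 0 := by
            rw [hq, hre, zero_smul, add_zero] at hq0
            exact (smul_eq_zero.1 hq0).resolve_right hv0
          exact Complex.ext hre him
        have hz0 : z ≠ 0 := by
          intro h
          have := hzV 1 (by rw [h, smul_zero]; exact V₀.zero_mem)
          simp at this
        set L : Submodule ℂ T := ℂ ∙ z with hL
        have hLinf : L.restrictScalars ℝ ⊓ V₀ = ⊥ := by
          rw [eq_bot_iff]
          intro x hx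
          rw [Submodule.mem_inf, Submodule.restrictScalars_mem, hL,
            Submodule.mem_span_singleton] at hx
          obtain ⟨⟨a, rfl⟩, hx2⟩ := hx
          rw [hzV a hx2, zero_smul]
          exact Submodule.zero_mem ⊥
        have hLfin : finrank ℂ L = 1 := finrank_span_singleton hz0
        have hQ : finrank ℂ (T ⧸ L) + 1 = finrank ℂ T := by
          have := Submodule.finrank_quotient_add_finrank L
          omega
        set V₀' := V₀.map ((L.mkQ).restrictScalars ℝ) with hV₀'
        have hd' : finrank ℝ V₀' = finrank ℝ V₀ := by
          rw [hV₀']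
          have h1 := finrank_map_mkQ L V₀
          rw [hLinf] at h1
          have h2 : finrank ℝ ((⊥ : Submodule ℝ T).comap V₀.subtype) = 0 := by
            rw [Submodule.comap_bot, Submodule.ker_subtype, finrank_bot]
          omega
        have hdle : finrank ℝ V₀' ≤ 2 * finrank ℂ (T ⧸ L) := by
          have h1 := Submodule.finrank_le V₀'
          rw [finrank_real_of_complex] at h1
          exact h1
        obtain ⟨V', hV'rank, hV'inf⟩ := ih (T ⧸ L) V₀' (by omega)
        refine ⟨V'.comap L.mkQ, ?_, ?_⟩
        · have h5 := finrank_comap_mkQ L V'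
          omega
        · rw [eq_bot_iff]
          intro x hx
          rw [Submodule.mem_inf, Submodule.restrictScalars_mem, Submodule.mem_comap] at hx
          obtain ⟨hx1, hx2⟩ := hx
          have hxq0 : L.mkQ x ∈ V'.restrictScalars ℝ ⊓ V₀' :=
            ⟨hx1, Submodule.mem_map_of_mem hx2⟩
          rw [hV'inf] at hxq0
          have hxL : x ∈ L := (Submodule.Quotient.mk_eq_zero L).1 hxq0
          have hmem : x ∈ L.restrictScalars ℝ ⊓ V₀ := ⟨hxL, hx2⟩
          rw [hLinf] at hmem
          exact hmem
      · -- V₀ = ℝ v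
        have hV₀v : ∀ x ∈ V₀, x ∈ (ℝ ∙ v : Submodule ℝ T) := by
          push_neg at hw; exact hw
        set L : Submodule ℂ T := ℂ ∙ v with hL
        have hV₀L : V₀ ≤ L.restrictScalars ℝ := by
          intro x hx
          obtain ⟨c, rfl⟩ := Submodule.mem_span_singleton.1 (hV₀v x hx)
          rw [Submodule.restrictScalars_mem, ← Complex.coe_smul]
          exact Submodule.smul_mem _ _ (Submodule.mem_span_singleton_self v)
        have hd : finrank ℝ V₀ = 1 := by
          have h1 : (ℝ ∙ v : Submodule ℝ T) = V₀ :=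
            le_antisymm ((Submodule.span_singleton_le_iff_mem v V₀).2 hvV₀)
              (fun x hx => hV₀v x hx)
          rw [← h1]
          exact finrank_span_singleton hv0
        obtain ⟨V, _, hVL, hVrank⟩ := exists_compl_in L ⊤ le_top
        refine ⟨V, ?_, ?_⟩
        · have h2 : finrank ℂ L = 1 := finrank_span_singleton hv0
          have h3 : finrank ℂ (⊤ : Submodule ℂ T) = finrank ℂ T := finrank_top ℂ T
          rw [hd]
          omega
        · rw [eq_bot_iff]
          intro x hx
          rw [Submodule.mem_inf, Submodule.restrictScalars_mem] at hx
          obtain ⟨hx1, hx2⟩ := hx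
          have hmem : x ∈ V ⊓ L := ⟨hx1, hV₀L hx2⟩
          rw [hVL] at hmem
          exact hmem

/-- Let `T` be a `ℂ`-vector space of finite dimension `g` and `W` a
`ℂ`-subspace of `T` with `dim_ℂ W = m`.  Let `V₀` be an `ℝ`-subspace of `T` (viewed as a
real vector space) of real dimension `2m + 2k` containing `W`.  Then there exists a
`ℂ`-subspace `V` of `T` with `dim_ℂ V = g - (m + k)` such that `V ∩ V₀ = 0`. -/
theorem exists_complex_complement_of_real_subspace
    (T : Type*) [AddCommGroup T] [Module ℂ T] [FiniteDimensional ℂ T]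
    (g m k : ℕ) (hT : Module.finrank ℂ T = g)
    (W : Submodule ℂ T) (hW : Module.finrank ℂ W = m)
    (V₀ : Submodule ℝ T) (hV₀ : Module.finrank ℝ V₀ = 2 * m + 2 * k)
    (hWV₀ : W.restrictScalars ℝ ≤ V₀) :
    ∃ V : Submodule ℂ T, Module.finrank ℂ V = g - (m + k) ∧
      V.restrictScalars ℝ ⊓ V₀ = ⊥ := by
  obtain ⟨V, hV1, hV2⟩ := key (finrank ℂ T) T V₀ le_rfl
  refine ⟨V, ?_, hV2⟩
  rw [hV1, hV₀, hT]
  omega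
end

section
/- Let k ≥ 0 be an integer, let U be a ℂ-vector space with dim_ℂ U = 2k, and let V₀ be an ℝ-vector subspace of U_ℝ of real dimension 2k such that the ℂ-span of V₀ equals U. Then there exists a ℂ-vector subspace V of U with dim_ℂ V = k such that V ∩ V₀ = 0. -/
/-- Let `U` be a `ℂ`-vector space with `dim_ℂ U = 2k` and let `V₀` be an
`ℝ`-subspace of `U` (viewed as a real vector space) of real dimension `2k` whose `ℂ`-span
is all of `U`.  Then there exists a `ℂ`-subspace `V` of `U` with `dim_ℂ V = k` such that
`V ∩ V₀ = 0`. -/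
theorem exists_complex_complement_of_totally_real_subspace
    (k : ℕ) (U : Type*) [AddCommGroup U] [Module ℂ U] [FiniteDimensional ℂ U]
    (hU : Module.finrank ℂ U = 2 * k)
    (V₀ : Submodule ℝ U) (hV₀ : Module.finrank ℝ V₀ = 2 * k)
    (hspan : Submodule.span ℂ (V₀ : Set U) = ⊤) :
    ∃ V : Submodule ℂ U, Module.finrank ℂ V = k ∧
      V.restrictScalars ℝ ⊓ V₀ = ⊥ := by
  classical
  have hfdV : FiniteDimensional ℝ V₀ := inferInstance
  set ι := Sum (Fin k) (Fin k) with hι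
  have hcard : Fintype.card ι = 2 * k := by simp [hι, two_mul]
  let b : Module.Basis ι ℝ V₀ :=
    (Module.finBasisOfFinrankEq ℝ V₀ hV₀).reindex
      ((finCongr (two_mul k)).trans finSumFinEquiv.symm)
  let f : ι → U := fun i => (b i : U)
  have hVR : Submodule.span ℝ (Set.range f) = V₀ := by
    have h1 : Set.range f = V₀.subtype '' Set.range b := by
      exact Set.range_comp _ _
    rw [h1, ← Submodule.map_span, b.span_eq, Submodule.map_subtype_top]
  have hspanf : ⊤ ≤ Submodule.span ℂ (Set.range f) := by
    rw [← hspan]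
    refine Submodule.span_le.2 fun x hx => ?_
    have hx' : x ∈ Submodule.span ℝ (Set.range f) := by rwa [hVR]
    exact Submodule.span_subset_span ℝ ℂ _ hx'
  let e : Module.Basis ι ℂ U := basisOfTopLeSpanOfCardEqFinrank f hspanf (by rw [hcard, hU])
  have he : ∀ i, e i = f i := fun i =>
    congrFun (coe_basisOfTopLeSpanOfCardEqFinrank f hspanf (by rw [hcard, hU])) i
  let g : Fin k → U := fun j => e (.inl j) + Complex.I • e (.inr j)
  have hrepg : ∀ j : Fin k, e.repr (g j) =
      Finsupp.single (Sum.inl j : ι) (1:ℂ)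
        + Complex.I • Finsupp.single (Sum.inr j : ι) (1:ℂ) := by
    intro j
    simp [g, map_add, map_smul, Module.Basis.repr_self]
  have hrepa : ∀ (c : Fin k → ℂ) (i : ι),
      e.repr (∑ j, c j • g j) i = ∑ j, c j * (e.repr (g j) i) := by
    intro c i
    rw [map_sum]
    rw [Finsupp.finset_sum_apply]
    refine Finset.sum_congr rfl fun j _ => ?_
    rw [map_smul]
    simp
  have hrepl : ∀ (c : Fin k → ℂ) (j : Fin k),
      e.repr (∑ j, c j • g j) (Sum.inl j) = c j := by
    intro c j
    rw [hrepa, Finset.sum_eq_single j]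
    · simp [hrepg]
    · intro x _ hx
      rw [hrepg, Finsupp.add_apply, Finsupp.smul_apply,
        Finsupp.single_eq_of_ne' (fun h => hx (Sum.inl.inj h)), Finsupp.single_eq_of_ne' (by simp)]
      simp
    · intro h; exact absurd (Finset.mem_univ j) h
  have hrepr' : ∀ (c : Fin k → ℂ) (j : Fin k),
      e.repr (∑ j, c j • g j) (Sum.inr j) = Complex.I * c j := by
    intro c j
    rw [hrepa, Finset.sum_eq_single j]
    · simp [hrepg, mul_comm]
    · intro x _ hx
      rw [hrepg, Finsupp.add_apply, Finsupp.smul_apply,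
        Finsupp.single_eq_of_ne' (by simp), Finsupp.single_eq_of_ne' (fun h => hx (Sum.inr.inj h))]
      simp
    · intro h; exact absurd (Finset.mem_univ j) h
  have hg : LinearIndependent ℂ g := by
    rw [Fintype.linearIndependent_iff]
    intro c hc j
    have := hrepl c j
    rw [hc] at this
    simpa using this.symm
  refine ⟨Submodule.span ℂ (Set.range g), ?_, ?_⟩
  · rw [finrank_span_eq_card hg, Fintype.card_fin]
  · rw [Submodule.eq_bot_iff]
    rintro x ⟨hxV, hxV₀⟩
    obtain ⟨c, hc⟩ := (Submodule.mem_span_range_iff_exists_fun ℂ).1 hxV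
    -- x ∈ V₀: real coordinates
    set xv : V₀ := ⟨x, hxV₀⟩ with hxv
    have hsum : ∑ i, ((b.repr xv i : ℂ)) • e i = x := by
      have h0 : ∑ i, b.repr xv i • b i = xv := b.sum_repr xv
      have h1 : ∑ i, b.repr xv i • f i = x := by
        have := congrArg (V₀.subtype) h0
        rw [map_sum] at this; simpa only [map_smul, Submodule.subtype_apply] using this
      rw [← h1]
      congr 1; ext i
      rw [he]
      rw [← algebraMap_smul ℂ (b.repr xv i) (f i)]
      norm_num
    have hre : ∀ i, e.repr x i = ((b.repr xv i : ℝ) : ℂ) := by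
      intro i
      conv_lhs => rw [← hsum]
      rw [map_sum, Finsupp.finset_sum_apply]
      rw [Finset.sum_eq_single i]
      · rw [map_smul, Module.Basis.repr_self, Finsupp.smul_apply, Finsupp.single_eq_same]
        simp
      · intro x _ hx
        rw [map_smul, Module.Basis.repr_self, Finsupp.smul_apply, Finsupp.single_eq_of_ne' hx,
          smul_zero]
      · intro h; exact absurd (Finset.mem_univ i) h
    have hcz : ∀ j, c j = 0 := by
      intro j
      have h1 : c j = ((b.repr xv (Sum.inl j) : ℝ) : ℂ) := by
        rw [← hrepl c j, hc, hre]
      have h2 : Complex.I * c j = ((b.repr xv (Sum.inr j) : ℝ) : ℂ) := by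
        rw [← hrepr' c j, hc, hre]
      have h3 : (Complex.I * c j).im = 0 := by rw [h2]; simp
      rw [h1] at h3
      simp at h3
      rw [h1, h3]; simp
    rw [← hc]
    simp [hcz]
end

section
/- Let F be a field, let M ≥ r ≥ 0 be integers, and let I be a prime ideal of the polynomial ring F[X₀, …, X_M] with X₀ ∉ I. Let Q be the fraction field of the integral domain F[X₀, …, X_M]/I, and for 1 ≤ i ≤ r let u_i ∈ Q be the image of X_i divided by the image of X₀. Assume that u₁, …, u_r are algebraically independent over F. Then I contains no nonzero homogeneous polynomial involving only the variables X₀, …, X_r; consequently, for every integer d ≥ 0, the composition F[X₀, …, X_r]_d → F[X₀, …, X_M]_d → F[X₀, …, X_M]_d / I_d is injective, and hence dim_F (F[X₀, …, X_M]_d / I_d) ≥ binom(r + d, r). -/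
set_option maxHeartbeats 1000000
set_option synthInstance.maxHeartbeats 1000000

open MvPolynomial

/-- Dehomogenization substitution. -/
noncomputable def gaux (F : Type*) [Field F] (M r : ℕ) : Fin (M + 1) → MvPolynomial (Fin r) F := fun j =>
  if h : 0 < (j : ℕ) ∧ (j : ℕ) ≤ r then MvPolynomial.X ⟨(j : ℕ) - 1, by omega⟩ else 1

lemma gaux_pos (F : Type*) [Field F] (M r : ℕ) (j : Fin (M + 1))
    (h : 0 < (j : ℕ) ∧ (j : ℕ) ≤ r) :
    gaux F M r j = MvPolynomial.X ⟨(j : ℕ) - 1, by omega⟩ := dif_pos h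

lemma gaux_neg (F : Type*) [Field F] (M r : ℕ) (j : Fin (M + 1))
    (h : ¬(0 < (j : ℕ) ∧ (j : ℕ) ≤ r)) : gaux F M r j = 1 := dif_neg h

lemma key_zero
    (F : Type*) [Field F] (M r : ℕ) (hr : r ≤ M)
    (I : Ideal (MvPolynomial (Fin (M + 1)) F)) [I.IsPrime]
    (hX0 : MvPolynomial.X 0 ∉ I)
    (u : Fin r → FractionRing (MvPolynomial (Fin (M + 1)) F ⧸ I))
    (hu : ∀ i : Fin r, u i =
      algebraMap (MvPolynomial (Fin (M + 1)) F ⧸ I) _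
          (Ideal.Quotient.mk I (MvPolynomial.X ⟨(i : ℕ) + 1, by have := i.2; omega⟩)) /
        algebraMap (MvPolynomial (Fin (M + 1)) F ⧸ I) _
          (Ideal.Quotient.mk I (MvPolynomial.X 0)))
    (hind : ∀ p : MvPolynomial (Fin r) F,
      MvPolynomial.eval₂
        ((algebraMap (MvPolynomial (Fin (M + 1)) F ⧸ I)
            (FractionRing (MvPolynomial (Fin (M + 1)) F ⧸ I))).comp
          (algebraMap F (MvPolynomial (Fin (M + 1)) F ⧸ I))) u p = 0 → p = 0) :
    ∀ p ∈ I, ∀ d : ℕ, p.IsHomogeneous d →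
        (↑p.vars : Set (Fin (M + 1))) ⊆ {j : Fin (M + 1) | (j : ℕ) ≤ r} → p = 0 := by
  classical
  have hf0 : ((algebraMap (MvPolynomial (Fin (M + 1)) F ⧸ I)
      (FractionRing (MvPolynomial (Fin (M + 1)) F ⧸ I))).comp
      (algebraMap F (MvPolynomial (Fin (M + 1)) F ⧸ I)))
      = algebraMap F (FractionRing (MvPolynomial (Fin (M + 1)) F ⧸ I)) :=
    (IsScalarTower.algebraMap_eq F _ _).symm
  have hind' : ∀ p : MvPolynomial (Fin r) F, MvPolynomial.aeval u p = 0 → p = 0 := by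
    intro p hp
    exact hind p (by rw [hf0, ← MvPolynomial.aeval_def]; exact hp)
  set x : Fin (M + 1) → FractionRing (MvPolynomial (Fin (M + 1)) F ⧸ I) := fun j =>
    algebraMap _ _ (Ideal.Quotient.mk I (MvPolynomial.X j)) with hx
  have hxj : ∀ j, x j = algebraMap _ _ (Ideal.Quotient.mk I (MvPolynomial.X j)) := fun _ => rfl
  have hx0 : x 0 ≠ 0 := by
    rw [hxj, ne_eq, IsFractionRing.to_map_eq_zero_iff, Ideal.Quotient.eq_zero_iff_mem]
    exact hX0
  intro p hpI d hhom hvars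
  have hjvars : ∀ j : Fin (M + 1), j ∈ p.vars → (j : ℕ) ≤ r := fun j hj => hvars hj
  have hsupp : ∀ σ ∈ p.support, ∀ j : Fin (M + 1), r < (j : ℕ) → σ j = 0 := by
    intro σ hσ j hj
    by_contra h
    exact absurd (hjvars j ((MvPolynomial.mem_vars j).mpr
      ⟨σ, hσ, Finsupp.mem_support_iff.mpr h⟩)) (by omega)
  have hdeg : ∀ σ ∈ p.support, ∑ j ∈ σ.support, σ j = d := by
    intro σ hσ
    by_contra h
    exact (MvPolynomial.mem_support_iff.mp hσ) (hhom.coeff_eq_zero h)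
  set g : Fin (M + 1) → MvPolynomial (Fin r) F := gaux F M r with hg
  set q : MvPolynomial (Fin r) F := MvPolynomial.aeval g p with hq
  -- Step 1: q = 0
  have hq0 : q = 0 := by
    apply hind'
    have h1 : (MvPolynomial.aeval u) q
        = MvPolynomial.aeval (fun j => MvPolynomial.aeval u (g j)) p := by
      rw [hq, ← MvPolynomial.comp_aeval_apply]
    set v : Fin (M + 1) → FractionRing (MvPolynomial (Fin (M + 1)) F ⧸ I) :=
      fun j => x j / x 0 with hv
    have hvj : ∀ j, v j = x j / x 0 := fun _ => rfl
    have h2 : MvPolynomial.aeval (fun j => MvPolynomial.aeval u (g j)) p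
        = MvPolynomial.aeval v p := by
      rw [MvPolynomial.aeval_def, MvPolynomial.aeval_def]
      apply MvPolynomial.eval₂_congr
      intro i c hic hcp
      have hivars : (i : ℕ) ≤ r := hjvars i ((MvPolynomial.mem_vars i).mpr
        ⟨c, MvPolynomial.mem_support_iff.mpr hcp, hic⟩)
      rcases Nat.eq_zero_or_pos (i : ℕ) with h0 | h0
      · rw [hg, gaux_neg F M r i (by omega), map_one, hvj]
        have hi : i = 0 := Fin.ext (by simpa using h0)
        rw [hi, div_self hx0]
      · rw [hg, gaux_pos F M r i ⟨h0, hivars⟩, MvPolynomial.aeval_X,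
          hu ⟨(i : ℕ) - 1, by omega⟩, hvj, hxj, hxj]
        congr 3
        exact congrArg MvPolynomial.X (Fin.ext (by show (i : ℕ) - 1 + 1 = (i : ℕ); omega))
    have h3 : MvPolynomial.aeval v p = (x 0)⁻¹ ^ d * MvPolynomial.aeval x p := by
      rw [MvPolynomial.aeval_def, MvPolynomial.aeval_def, MvPolynomial.eval₂_eq,
        MvPolynomial.eval₂_eq, Finset.mul_sum]
      refine Finset.sum_congr rfl fun σ hσ => ?_
      have hprod : ∀ i ∈ σ.support, v i ^ σ i = (x 0)⁻¹ ^ σ i * x i ^ σ i := by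
        intro i _
        rw [hvj, div_eq_mul_inv, mul_pow]
        ring
      rw [Finset.prod_congr rfl hprod, Finset.prod_mul_distrib,
        Finset.prod_pow_eq_pow_sum, hdeg σ hσ]
      ring
    have h4 : MvPolynomial.aeval x p = 0 := by
      have hψ := MvPolynomial.aeval_unique
        ((IsScalarTower.toAlgHom F (MvPolynomial (Fin (M + 1)) F ⧸ I)
            (FractionRing (MvPolynomial (Fin (M + 1)) F ⧸ I))).comp (Ideal.Quotient.mkₐ F I))
      have hψx : (((IsScalarTower.toAlgHom F (MvPolynomial (Fin (M + 1)) F ⧸ I)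
          (FractionRing (MvPolynomial (Fin (M + 1)) F ⧸ I))).comp (Ideal.Quotient.mkₐ F I)) ∘
          MvPolynomial.X) = x := by
        funext j
        rw [hxj]
        simp
      rw [← hψx, ← hψ]
      simp only [AlgHom.comp_apply, Ideal.Quotient.mkₐ_eq_mk]
      rw [Ideal.Quotient.eq_zero_iff_mem.mpr hpI]
      simp
    rw [h1, h2, h3, h4, mul_zero]
  -- Step 2: p = 0
  let τ : (Fin (M + 1) →₀ ℕ) → (Fin r →₀ ℕ) := fun σ =>
    Finsupp.equivFunOnFinite.symm (fun i => σ ⟨(i : ℕ) + 1, by omega⟩)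
  have hτ : ∀ σ (i : Fin r), τ σ i = σ ⟨(i : ℕ) + 1, by omega⟩ := fun σ i => rfl
  have hτinj : ∀ σ ∈ p.support, ∀ σ' ∈ p.support, τ σ = τ σ' → σ = σ' := by
    intro σ hσ σ' hσ' h
    have hval : ∀ j : Fin (M + 1), 0 < (j : ℕ) → σ j = σ' j := by
      intro j hj
      rcases le_or_gt (j : ℕ) r with hjr | hjr
      · have h1 := DFunLike.congr_fun h ⟨(j : ℕ) - 1, by omega⟩
        rw [hτ, hτ] at h1
        have hjj : (⟨((⟨(j : ℕ) - 1, by omega⟩ : Fin r) : ℕ) + 1, by omega⟩ : Fin (M + 1)) = j :=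
          Fin.ext (by show (j : ℕ) - 1 + 1 = (j : ℕ); omega)
        rwa [hjj] at h1
      · rw [hsupp σ hσ j hjr, hsupp σ' hσ' j hjr]
    have hsum : ∑ j, σ j = ∑ j, σ' j := by
      rw [← Finset.sum_subset (Finset.subset_univ σ.support)
          (fun j _ hj => Finsupp.notMem_support_iff.mp hj),
        ← Finset.sum_subset (Finset.subset_univ σ'.support)
          (fun j _ hj => Finsupp.notMem_support_iff.mp hj),
        hdeg σ hσ, hdeg σ' hσ']
    rw [← Finset.add_sum_erase _ σ (Finset.mem_univ (0 : Fin (M + 1))),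
      ← Finset.add_sum_erase _ σ' (Finset.mem_univ (0 : Fin (M + 1)))] at hsum
    have herase : ∑ j ∈ Finset.univ.erase (0 : Fin (M + 1)), σ j
        = ∑ j ∈ Finset.univ.erase (0 : Fin (M + 1)), σ' j := by
      refine Finset.sum_congr rfl fun j hj => ?_
      have hj0 : j ≠ 0 := (Finset.mem_erase.mp hj).1
      refine hval j (Nat.pos_of_ne_zero (fun hc => hj0 (Fin.ext ?_)))
      simpa using hc
    rw [herase] at hsum
    have h00 : σ 0 = σ' 0 := Nat.add_right_cancel hsum
    ext j
    rcases Nat.eq_zero_or_pos (j : ℕ) with h0 | h0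
    · have hj : j = 0 := Fin.ext (by simpa using h0)
      rw [hj]; exact h00
    · exact hval j h0
  have hmono : ∀ σ ∈ p.support,
      MvPolynomial.aeval g (MvPolynomial.monomial σ (MvPolynomial.coeff σ p))
        = MvPolynomial.monomial (τ σ) (MvPolynomial.coeff σ p) := by
    intro σ hσ
    rw [MvPolynomial.aeval_monomial, MvPolynomial.monomial_eq, ← MvPolynomial.algebraMap_eq]
    congr 1
    rw [Finsupp.prod_fintype _ _ (fun j => pow_zero _),
      Finsupp.prod_fintype _ _ (fun j => pow_zero _)]
    let e : Fin r ↪ Fin (M + 1) :=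
      ⟨fun i => ⟨(i : ℕ) + 1, by omega⟩, fun a b hab => by
        apply Fin.ext
        have := congrArg Fin.val hab
        simpa using this⟩
    have hge : ∀ i : Fin r, g (e i) = MvPolynomial.X i := by
      intro i
      rw [hg, gaux_pos F M r (e i) ⟨by show 0 < (i : ℕ) + 1; omega, by show (i : ℕ) + 1 ≤ r; omega⟩]
      exact congrArg MvPolynomial.X (Fin.ext (by
        show (i : ℕ) + 1 - 1 = (i : ℕ); omega))
    calc ∏ j : Fin (M + 1), g j ^ σ j
        = ∏ j ∈ Finset.univ.map e, g j ^ σ j := by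
          refine (Finset.prod_subset (Finset.subset_univ _) ?_).symm
          intro j _ hj
          rcases Nat.eq_zero_or_pos (j : ℕ) with h0 | h0
          · rw [hg, gaux_neg F M r j (by omega), one_pow]
          · rcases le_or_gt (j : ℕ) r with hjr | hjr
            · refine absurd (Finset.mem_map.mpr ⟨⟨(j : ℕ) - 1, by omega⟩, Finset.mem_univ _,
                Fin.ext ?_⟩) hj
              show (j : ℕ) - 1 + 1 = (j : ℕ)
              omega
            · rw [hsupp σ hσ j hjr, pow_zero]
      _ = ∏ i : Fin r, g (e i) ^ σ (e i) := Finset.prod_map _ _ _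
      _ = ∏ i : Fin r, MvPolynomial.X i ^ (τ σ) i := by
          refine Finset.prod_congr rfl fun i _ => ?_
          rw [hge i, hτ]
          rfl
  have hqsum : q = ∑ σ ∈ p.support, MvPolynomial.monomial (τ σ) (MvPolynomial.coeff σ p) := by
    conv_lhs => rw [hq, p.as_sum, map_sum]
    exact Finset.sum_congr rfl hmono
  rw [← MvPolynomial.support_eq_empty, Finset.eq_empty_iff_forall_notMem]
  intro σ hσ
  have hc : MvPolynomial.coeff (τ σ) q = MvPolynomial.coeff σ p := by
    rw [hqsum, MvPolynomial.coeff_sum, Finset.sum_eq_single_of_mem σ hσ]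
    · simp [MvPolynomial.coeff_monomial]
    · intro σ' hσ' hne
      rw [MvPolynomial.coeff_monomial, if_neg]
      intro hcontra
      exact hne (hτinj σ' hσ' σ hσ hcontra)
  rw [hq0] at hc
  simp only [MvPolynomial.coeff_zero] at hc
  exact (MvPolynomial.mem_support_iff.mp hσ) hc.symm


lemma aux_sum_id (n : ℕ) (f : Fin n →₀ ℕ) : (f.sum fun _ => id) = f.degree := rfl

lemma rank_homSub (F : Type*) [Field F] (r d : ℕ) :
    Module.rank F (MvPolynomial.homogeneousSubmodule (Fin (r + 1)) F d) =
      ((r + d).choose r : Cardinal) := by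
  classical
  rw [MvPolynomial.homogeneousSubmodule_eq_finsupp_supported,
    LinearEquiv.rank_eq (AddMonoidAlgebra.supportedEquivFinsupp _), rank_finsupp_self]
  let E : {s : Fin (r + 1) →₀ ℕ // s.degree = d} ≃ Sym (Fin (r + 1)) d :=
    { toFun := fun s => ⟨Finsupp.toMultiset s.1, by
        rw [Finsupp.card_toMultiset, aux_sum_id]; exact s.2⟩
      invFun := fun m => ⟨Multiset.toFinsupp m.1, by
        rw [← aux_sum_id, ← Finsupp.card_toMultiset, Multiset.toFinsupp_toMultiset]
        exact m.2⟩
      left_inv := fun s => Subtype.ext (Finsupp.toMultiset_toFinsupp s.1)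
      right_inv := fun m => Subtype.ext (Multiset.toFinsupp_toMultiset m.1) }
  have h : Cardinal.mk ({s : Fin (r + 1) →₀ ℕ | s.degree = d}) =
      (Fintype.card (Sym (Fin (r + 1)) d) : Cardinal) := by
    rw [show ({s : Fin (r + 1) →₀ ℕ | s.degree = d} : Set _) = {s : Fin (r+1) →₀ ℕ | s.degree = d} from rfl]
    exact (Cardinal.mk_congr E).trans (Cardinal.mk_fintype _)
  rw [h, Sym.card_sym_eq_choose]
  simp only [Fintype.card_fin, Cardinal.lift_natCast]
  norm_cast
  rw [show r + 1 + d - 1 = r + d by omega, Nat.choose_symm_add]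



/-- Let `F` be a field, `M ≥ r ≥ 0`, and `I` a prime ideal of
`F[X₀, …, X_M]` with `X₀ ∉ I`.  Let `Q` be the fraction field of `F[X₀, …, X_M]/I` and for
`1 ≤ i ≤ r` let `uᵢ ∈ Q` be the image of `Xᵢ` divided by the image of `X₀`.  If
`u₁, …, u_r` are algebraically independent over `F`, then `I` contains no nonzero
homogeneous polynomial involving only the variables `X₀, …, X_r`; consequently for every
`d ≥ 0` the composition `F[X₀, …, X_r]_d → F[X₀, …, X_M]_d → F[X₀, …, X_M]_d / I_d` is
injective, and hence `dim_F (F[X₀, …, X_M]_d / I_d) ≥ binom (r + d) r`. -/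
theorem hilbert_function_lower_bound_of_algebraically_independent
    (F : Type*) [Field F] (M r : ℕ) (hr : r ≤ M)
    (I : Ideal (MvPolynomial (Fin (M + 1)) F)) [I.IsPrime]
    (hX0 : MvPolynomial.X 0 ∉ I)
    (u : Fin r → FractionRing (MvPolynomial (Fin (M + 1)) F ⧸ I))
    (hu : ∀ i : Fin r, u i =
      algebraMap (MvPolynomial (Fin (M + 1)) F ⧸ I) _
          (Ideal.Quotient.mk I (MvPolynomial.X ⟨(i : ℕ) + 1, by omega⟩)) /
        algebraMap (MvPolynomial (Fin (M + 1)) F ⧸ I) _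
          (Ideal.Quotient.mk I (MvPolynomial.X 0)))
    (hind : ∀ p : MvPolynomial (Fin r) F,
      MvPolynomial.eval₂
        ((algebraMap (MvPolynomial (Fin (M + 1)) F ⧸ I)
            (FractionRing (MvPolynomial (Fin (M + 1)) F ⧸ I))).comp
          (algebraMap F (MvPolynomial (Fin (M + 1)) F ⧸ I))) u p = 0 → p = 0) :
    (∀ p ∈ I, ∀ d : ℕ, p.IsHomogeneous d →
        (↑p.vars : Set (Fin (M + 1))) ⊆ {j : Fin (M + 1) | (j : ℕ) ≤ r} → p = 0) ∧
    (∀ d : ℕ, Set.InjOn (Ideal.Quotient.mk I)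
        {p : MvPolynomial (Fin (M + 1)) F | p.IsHomogeneous d ∧
          (↑p.vars : Set (Fin (M + 1))) ⊆ {j : Fin (M + 1) | (j : ℕ) ≤ r}}) ∧
    (∀ d : ℕ, ((r + d).choose r : Cardinal) ≤
      Module.rank F ↥(Submodule.map (Ideal.Quotient.mkₐ F I).toLinearMap
        (MvPolynomial.homogeneousSubmodule (Fin (M + 1)) F d))) := by
  classical
  have key := key_zero F M r hr I hX0 u hu hind
  have part2 : ∀ d : ℕ, Set.InjOn (Ideal.Quotient.mk I)
      {p : MvPolynomial (Fin (M + 1)) F | p.IsHomogeneous d ∧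
        (↑p.vars : Set (Fin (M + 1))) ⊆ {j : Fin (M + 1) | (j : ℕ) ≤ r}} := by
    intro d p hp q hq h
    obtain ⟨hp1, hp2⟩ := hp
    obtain ⟨hq1, hq2⟩ := hq
    have hsub : p - q ∈ I := (Ideal.Quotient.eq).mp h
    have hvars : (↑(p - q).vars : Set (Fin (M + 1))) ⊆ {j : Fin (M + 1) | (j : ℕ) ≤ r} := by
      intro j hj
      have := MvPolynomial.vars_sub_subset (p := p) (q := q) hj
      rcases Finset.mem_union.mp this with h' | h'
      · exact hp2 h'
      · exact hq2 h'
    have := key (p - q) hsub d (hp1.sub hq1) hvars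
    exact sub_eq_zero.mp this
  refine ⟨key, part2, ?_⟩
  intro d
  set e : Fin (r + 1) → Fin (M + 1) := Fin.castLE (by omega) with he
  have heinj : Function.Injective e := Fin.castLE_injective _
  set L : MvPolynomial (Fin (r + 1)) F →ₗ[F] (MvPolynomial (Fin (M + 1)) F ⧸ I) :=
    ((Ideal.Quotient.mkₐ F I).comp
      (MvPolynomial.rename e : MvPolynomial (Fin (r + 1)) F →ₐ[F]
        MvPolynomial (Fin (M + 1)) F)).toLinearMap with hL
  have hmem : ∀ s ∈ MvPolynomial.homogeneousSubmodule (Fin (r + 1)) F d,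
      L s ∈ Submodule.map (Ideal.Quotient.mkₐ F I).toLinearMap
        (MvPolynomial.homogeneousSubmodule (Fin (M + 1)) F d) := by
    intro s hs
    exact ⟨MvPolynomial.rename e s,
      ((MvPolynomial.mem_homogeneousSubmodule _ _).mp hs).rename_isHomogeneous, rfl⟩
  have hΦ : Function.Injective (L.restrict hmem) := by
    intro s s' hss
    have h1 : Ideal.Quotient.mk I (MvPolynomial.rename e s.1)
        = Ideal.Quotient.mk I (MvPolynomial.rename e s'.1) := by
      have := congrArg Subtype.val hss
      simpa [hL, LinearMap.restrict_apply] using this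
    have hvr : ∀ t : MvPolynomial (Fin (r + 1)) F,
        (↑(MvPolynomial.rename e t).vars : Set (Fin (M + 1)))
          ⊆ {j : Fin (M + 1) | (j : ℕ) ≤ r} := by
      intro t j hj
      obtain ⟨i, _, hi⟩ := Finset.mem_image.mp (MvPolynomial.vars_rename e t hj)
      have : (j : ℕ) = (i : ℕ) := by rw [← hi, he]; simp
      simp only [Set.mem_setOf_eq, this]
      omega
    have h2 := part2 d
      ⟨((MvPolynomial.mem_homogeneousSubmodule _ _).mp s.2).rename_isHomogeneous, hvr s.1⟩
      ⟨((MvPolynomial.mem_homogeneousSubmodule _ _).mp s'.2).rename_isHomogeneous, hvr s'.1⟩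
      h1
    exact Subtype.ext (MvPolynomial.rename_injective e heinj h2)
  calc ((r + d).choose r : Cardinal)
      = Module.rank F (MvPolynomial.homogeneousSubmodule (Fin (r + 1)) F d) :=
        (rank_homSub F r d).symm
    _ ≤ _ := LinearMap.rank_le_of_injective _ hΦ
end
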